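/- arXiv:2508.19360 — 5 statements merged into one kernel-verified Lean document; each statement's English description precedes it below -/
import Mathlib

section
/- In the monoid M_n presented by generators e_1,...,e_{n-1}, \tau with relations e_i^2 = \tau e_i, e_i\tau = \tau e_i, e_i e_j = e_j e_i for |i-j| > 1, and e_i e_{i\pm 1} e_i = e_i, if a word w is reduced (not equal in M_n to any word with strictly fewer occurrences of the generators e_1,...,e_{n-1}) and is not a power of \tau, then the generator of maximal index occurring in w occurs exactly once. -/
/-- Generators of the Temperley–Lieb monoid `M n`: `Sum.inl i` is the generator
`e_{i+1}` (for `i : Fin (n-1)`, so `e_1, …, e_{n-1}`) and `Sum.inr ()` is `τ`. -/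
abbrev TLGen (n : ℕ) := Sum (Fin (n - 1)) Unit

/-- `τ` as a letter. -/
abbrev tau (n : ℕ) : TLGen n := Sum.inr ()

/-- The defining relations of the monoid `M n`:
`e_i e_i = τ e_i`, `e_i τ = τ e_i`, `e_i e_j = e_j e_i` for `|i-j| > 1`, and
`e_i e_{i±1} e_i = e_i`. -/
inductive TLRel (n : ℕ) : List (TLGen n) → List (TLGen n) → Prop
  | square (i : Fin (n - 1)) :
      TLRel n [Sum.inl i, Sum.inl i] [tau n, Sum.inl i]
  | commTau (i : Fin (n - 1)) :
      TLRel n [Sum.inl i, tau n] [tau n, Sum.inl i]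
  | comm (i j : Fin (n - 1)) (h : (i : ℕ) + 1 < j ∨ (j : ℕ) + 1 < i) :
      TLRel n [Sum.inl i, Sum.inl j] [Sum.inl j, Sum.inl i]
  | braid (i j : Fin (n - 1)) (h : (i : ℕ) = j + 1 ∨ (j : ℕ) = i + 1) :
      TLRel n [Sum.inl i, Sum.inl j, Sum.inl i] [Sum.inl i]

/-- One application of a defining relation inside an arbitrary context. -/
def TLStep (n : ℕ) (x y : List (TLGen n)) : Prop :=
  ∃ u v a b, TLRel n a b ∧ x = u ++ a ++ v ∧ y = u ++ b ++ v

/-- Equality in the presented monoid `M n`: the equivalence relation generated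
by applying the defining relations in arbitrary contexts. -/
def TLEq (n : ℕ) : List (TLGen n) → List (TLGen n) → Prop :=
  Relation.EqvGen (TLStep n)

/-- The number of occurrences of the generators `e_1, …, e_{n-1}` in a word. -/
def eCount {n : ℕ} (w : List (TLGen n)) : ℕ := (w.filter fun x => x.isLeft).length

/- ### Auxiliary lemmas -/

lemma tle_refl (n : ℕ) (x : List (TLGen n)) : TLEq n x x := Relation.EqvGen.refl x

lemma tle_symm {n : ℕ} {x y : List (TLGen n)} (h : TLEq n x y) : TLEq n y x :=
  Relation.EqvGen.symm _ _ h

lemma tle_trans {n : ℕ} {x y z : List (TLGen n)} (h1 : TLEq n x y) (h2 : TLEq n y z) :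
    TLEq n x z := Relation.EqvGen.trans _ _ _ h1 h2

lemma tle_rel {n : ℕ} {a b : List (TLGen n)} (h : TLRel n a b) (u v : List (TLGen n)) :
    TLEq n (u ++ a ++ v) (u ++ b ++ v) :=
  Relation.EqvGen.rel _ _ ⟨u, v, a, b, h, rfl, rfl⟩

lemma TLStep.context {n : ℕ} {a b : List (TLGen n)} (u v : List (TLGen n))
    (h : TLStep n a b) : TLStep n (u ++ a ++ v) (u ++ b ++ v) := by
  obtain ⟨p, q, c, d, hr, ha, hb⟩ := h
  exact ⟨u ++ p, q ++ v, c, d, hr, by simp [ha], by simp [hb]⟩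

lemma tle_context {n : ℕ} {a b : List (TLGen n)} (u v : List (TLGen n))
    (h : TLEq n a b) : TLEq n (u ++ a ++ v) (u ++ b ++ v) := by
  induction h with
  | rel x y h => exact Relation.EqvGen.rel _ _ (h.context u v)
  | refl x => exact tle_refl _ _
  | symm x y _ ih => exact tle_symm ih
  | trans x y z _ _ ih1 ih2 => exact tle_trans ih1 ih2

lemma tle_congr {n : ℕ} {a b x y : List (TLGen n)} (u v : List (TLGen n))
    (h : TLEq n a b) (hx : x = u ++ a ++ v) (hy : y = u ++ b ++ v) : TLEq n x y := by
  subst hx; subst hy; exact tle_context u v h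

lemma eCount_append {n : ℕ} (a b : List (TLGen n)) :
    eCount (a ++ b) = eCount a + eCount b := by simp [eCount]

lemma eCount_cons_inl {n : ℕ} (j : Fin (n - 1)) (a : List (TLGen n)) :
    eCount (Sum.inl j :: a) = eCount a + 1 := by simp [eCount, List.filter_cons]

lemma eCount_cons_inr {n : ℕ} (u : Unit) (a : List (TLGen n)) :
    eCount (Sum.inr u :: a) = eCount a := by simp [eCount]

instance (n : ℕ) : LawfulBEq (TLGen n) where
  eq_of_beq {a b} h := by
    cases a with
    | inl i => cases b with
      | inl j => exact congrArg Sum.inl (eq_of_beq (show (i == j) = true from h))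
      | inr u => exact absurd (show false = true from h) (by simp)
    | inr u => cases b with
      | inl j => exact absurd (show false = true from h) (by simp)
      | inr v => cases u; cases v; rfl
  rfl {a} := by
    cases a with
    | inl i => exact show (i == i) = true by simp
    | inr u => exact show (u == u) = true by simp

lemma split_first {α : Type*} [DecidableEq α] (a : α) :
    ∀ l : List α, a ∈ l → ∃ s t, l = s ++ a :: t ∧ a ∉ s := by
  intro l h
  induction l with
  | nil => cases h
  | cons b l ih =>
    by_cases hb : a = b
    · exact ⟨[], l, by simp [hb], by simp⟩
    · obtain ⟨s, t, h1, h2⟩ := ih ((List.mem_cons.mp h).resolve_left hb)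
      exact ⟨b :: s, t, by simp [h1], by simp [h2, hb]⟩

/-- Letters that commute with `e_m`. -/
lemma comm_letter {n : ℕ} (m : Fin (n - 1)) (c : TLGen n)
    (h : ∀ j : Fin (n - 1), c = Sum.inl j → (j : ℕ) + 1 < m) :
    TLEq n [Sum.inl m, c] [c, Sum.inl m] := by
  match c with
  | Sum.inr () => simpa using tle_rel (TLRel.commTau m) [] []
  | Sum.inl j => simpa using tle_rel (TLRel.comm m j (Or.inr (h j rfl))) [] []

lemma move_right {n : ℕ} (m : Fin (n - 1)) (y : List (TLGen n))
    (h : ∀ c ∈ y, TLEq n [Sum.inl m, c] [c, Sum.inl m]) :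
    TLEq n (Sum.inl m :: y) (y ++ [Sum.inl m]) := by
  induction y with
  | nil => exact tle_refl _ _
  | cons c y ih =>
    have h1 : TLEq n (Sum.inl m :: c :: y) (c :: Sum.inl m :: y) :=
      tle_congr [] y (h c List.mem_cons_self) (by simp) (by simp)
    have h2 : TLEq n (c :: Sum.inl m :: y) ((c :: y) ++ [Sum.inl m]) :=
      tle_congr [c] [] (ih fun d hd => h d (List.mem_cons_of_mem _ hd)) (by simp) (by simp)
    exact tle_trans h1 h2

/-- Key lemma: if all generators in `x` have index `≤ m` and `e_m` occurs at
least twice, then `x` is not reduced. -/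
lemma reduce_aux (n : ℕ) : ∀ M : ℕ, ∀ m : Fin (n - 1), (m : ℕ) < M →
    ∀ x : List (TLGen n), (∀ j : Fin (n - 1), Sum.inl j ∈ x → j ≤ m) →
    2 ≤ x.count (Sum.inl m) →
    ∃ x', TLEq n x x' ∧ eCount x' < eCount x := by
  intro M
  induction M with
  | zero => intro m hm; omega
  | succ M ih =>
    intro m hm x hx hcount
    -- split x at the first two occurrences of e_m
    have hmem : Sum.inl m ∈ x := by
      have hp : 0 < x.count (Sum.inl m) := by omega
      exact List.count_pos_iff.mp hp
    obtain ⟨u, t, hxut, humem⟩ := split_first _ x hmem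
    have hut : 1 ≤ t.count (Sum.inl m) := by
      have := hcount
      rw [hxut] at this
      rw [List.count_append, List.count_cons_self, List.count_eq_zero_of_not_mem humem] at this
      omega
    have hmem2 : Sum.inl m ∈ t := by
      have hp : 0 < t.count (Sum.inl m) := by omega
      exact List.count_pos_iff.mp hp
    obtain ⟨y, v, htyv, hymem⟩ := split_first _ t hmem2
    subst htyv
    subst hxut
    -- facts about y
    have hy_le : ∀ j : Fin (n - 1), Sum.inl j ∈ y → j ≤ m := by
      intro j hj; exact hx j (by simp [hj])
    have hy_ne : ∀ j : Fin (n - 1), Sum.inl j ∈ y → (j : ℕ) < (m : ℕ) := by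
      intro j hjy
      have h1 : (j : ℕ) ≤ (m : ℕ) := Fin.le_def.mp (hy_le j hjy)
      have h2 : (j : ℕ) ≠ (m : ℕ) := by
        intro h
        exact hymem (by rwa [show j = m from Fin.ext h] at hjy)
      omega
    by_cases hj : ∃ j : Fin (n - 1), Sum.inl j ∈ y ∧ (j : ℕ) + 1 = m
    · -- there is an e_{m-1} in y
      obtain ⟨j₀, hj₀mem, hj₀val⟩ := hj
      by_cases h2 : 2 ≤ y.count (Sum.inl j₀)
      · -- two occurrences of e_{m-1}: use the inductive hypothesis on y
        have hjM : (j₀ : ℕ) < M := by omega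
        have hy_le' : ∀ j : Fin (n - 1), Sum.inl j ∈ y → j ≤ j₀ := by
          intro j hjy
          have := hy_ne j hjy
          exact Fin.le_def.mpr (by omega)
        obtain ⟨y', hy', hcy'⟩ := ih j₀ hjM y hy_le' h2
        refine ⟨u ++ Sum.inl m :: (y' ++ Sum.inl m :: v), ?_, ?_⟩
        · exact tle_congr (u ++ [Sum.inl m]) (Sum.inl m :: v) hy' (by simp) (by simp)
        · simp only [eCount_append, eCount_cons_inl]
          omega
      · -- exactly one occurrence of e_{m-1}: braid move
        obtain ⟨p, q, hy, hpmem⟩ := split_first _ y hj₀mem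
        have hqmem : Sum.inl j₀ ∉ q := by
          intro hq
          have : 2 ≤ y.count (Sum.inl j₀) := by
            rw [hy]
            simp [List.count_append, List.count_cons]
            have := List.count_pos_iff.mpr hq
            omega
          exact h2 this
        subst hy
        have hcp : ∀ c ∈ p, TLEq n [Sum.inl m, c] [c, Sum.inl m] := by
          intro c hc
          refine comm_letter m c fun j hcj => ?_
          subst hcj
          have h1 := hy_ne j (by simp [hc])
          have h3 : j ≠ j₀ := fun h => hpmem (h ▸ hc)
          have h4 : (j : ℕ) ≠ j₀ := fun h => h3 (Fin.ext h)
          omega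
        have hcq : ∀ c ∈ q, TLEq n [Sum.inl m, c] [c, Sum.inl m] := by
          intro c hc
          refine comm_letter m c fun j hcj => ?_
          subst hcj
          have h1 := hy_ne j (by simp [hc])
          have h3 : j ≠ j₀ := fun h => hqmem (h ▸ hc)
          have h4 : (j : ℕ) ≠ j₀ := fun h => h3 (Fin.ext h)
          omega
        -- x = u ++ e_m :: (p ++ e_{j₀} :: (q ++ e_m :: v))
        have s1 : TLEq n (u ++ Sum.inl m :: ((p ++ Sum.inl j₀ :: q) ++ Sum.inl m :: v))
            (u ++ p ++ [Sum.inl m, Sum.inl j₀] ++ (q ++ Sum.inl m :: v)) :=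
          tle_congr u (Sum.inl j₀ :: q ++ Sum.inl m :: v) (move_right m p hcp)
            (by simp) (by simp)
        have s2 : TLEq n (u ++ p ++ [Sum.inl m, Sum.inl j₀] ++ (q ++ Sum.inl m :: v))
            (u ++ p ++ ([Sum.inl m, Sum.inl j₀, Sum.inl m] ++ (q ++ v))) :=
          tle_congr (u ++ p ++ [Sum.inl m, Sum.inl j₀]) v
            (tle_symm (move_right m q hcq)) (by simp) (by simp)
        have s3 : TLEq n (u ++ p ++ ([Sum.inl m, Sum.inl j₀, Sum.inl m] ++ (q ++ v)))
            (u ++ p ++ ([Sum.inl m] ++ (q ++ v))) :=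
          tle_congr (u ++ p) (q ++ v)
            (show TLEq n [Sum.inl m, Sum.inl j₀, Sum.inl m] [Sum.inl m] by
              simpa using tle_rel (TLRel.braid m j₀ (Or.inl hj₀val.symm)) [] [])
            (by simp) (by simp)
        refine ⟨_, tle_trans (tle_trans s1 s2) s3, ?_⟩
        simp [eCount, List.filter_cons]
    · -- no e_{m-1} in y: all of y commutes with e_m
      push_neg at hj
      have hcy : ∀ c ∈ y, TLEq n [Sum.inl m, c] [c, Sum.inl m] := by
        intro c hc
        refine comm_letter m c fun j hcj => ?_
        subst hcj
        have h1 := hy_ne j hc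
        have h2 := hj j hc
        omega
      have s1 : TLEq n (u ++ Sum.inl m :: (y ++ Sum.inl m :: v))
          (u ++ y ++ [Sum.inl m, Sum.inl m] ++ v) :=
        tle_congr u (Sum.inl m :: v) (move_right m y hcy) (by simp) (by simp)
      have s2 : TLEq n (u ++ y ++ [Sum.inl m, Sum.inl m] ++ v)
          (u ++ y ++ [tau n, Sum.inl m] ++ v) :=
        tle_rel (TLRel.square m) (u ++ y) v
      refine ⟨_, tle_trans s1 s2, ?_⟩
      simp [eCount_append, eCount_cons_inl, eCount_cons_inr, eCount, List.filter_cons]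

/-- In the monoid `M n`, if a word `w` is reduced (no word equal to it in `M n`
uses strictly fewer occurrences of the `e_i`) and is not a power of `τ`
(it contains some `e_m`), then the generator of maximal index occurring in `w`
occurs exactly once. -/
theorem reduced_max_index_occurs_once (n : ℕ) (w : List (TLGen n))
    (hred : ∀ v, TLEq n w v → eCount w ≤ eCount v)
    (m : Fin (n - 1)) (hm : Sum.inl m ∈ w)
    (hmax : ∀ j : Fin (n - 1), Sum.inl j ∈ w → j ≤ m) :
    w.count (Sum.inl m) = 1 := by
  have h1 : 1 ≤ w.count (Sum.inl m) := List.count_pos_iff.mpr hm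
  by_contra h
  have h2 : 2 ≤ w.count (Sum.inl m) := by omega
  obtain ⟨w', hw', hcw'⟩ := reduce_aux n ((m : ℕ) + 1) m (by omega) w hmax h2
  have := hred w' hw'
  omega
end

section
/- Every element of the monoid M_n presented by generators e_1,...,e_{n-1}, \tau with the Temperley-Lieb relations is equal to a word in Jones normal form, i.e. a word of the form \tau^p (e_{i_1} e_{i_1-1} ... e_{j_1})(e_{i_2} e_{i_2-1} ... e_{j_2}) ... (e_{i_r} e_{i_r-1} ... e_{j_r}) with i_1 < i_2 < ... < i_r and j_1 < j_2 < ... < j_r and j_k \le i_k for each k. -/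
/-- The decreasing consecutive run `e_i e_{i-1} ⋯ e_j` (for `j ≤ i`). -/
def run (n : ℕ) (i j : Fin (n - 1)) : List (TLGen n) :=
  (List.range ((i : ℕ) - j + 1)).map fun t =>
    Sum.inl ⟨(i : ℕ) - t, lt_of_le_of_lt (Nat.sub_le _ _) i.isLt⟩

namespace JonesNF
open List
variable {n : ℕ}

theorem tleq_rfl (w : List (TLGen n)) : TLEq n w w := Relation.EqvGen.refl w

theorem tleq_symm {x y : List (TLGen n)} (h : TLEq n x y) : TLEq n y x :=
  Relation.EqvGen.symm x y h

theorem tleq_trans {x y z : List (TLGen n)} (h1 : TLEq n x y) (h2 : TLEq n y z) :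
    TLEq n x z := Relation.EqvGen.trans x y z h1 h2

theorem tleq_of_rel {a b : List (TLGen n)} (u v : List (TLGen n)) (h : TLRel n a b) :
    TLEq n (u ++ a ++ v) (u ++ b ++ v) :=
  Relation.EqvGen.rel _ _ ⟨u, v, a, b, h, rfl, rfl⟩

theorem tleq_append_right {x y : List (TLGen n)} (h : TLEq n x y) (z : List (TLGen n)) :
    TLEq n (x ++ z) (y ++ z) := by
  induction h with
  | rel a b hab =>
      obtain ⟨u, v, p, q, hr, rfl, rfl⟩ := hab
      exact Relation.EqvGen.rel _ _ ⟨u, v ++ z, p, q, hr, by simp, by simp⟩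
  | refl a => exact Relation.EqvGen.refl _
  | symm a b _ ih => exact Relation.EqvGen.symm _ _ ih
  | trans a b c _ _ ih1 ih2 => exact Relation.EqvGen.trans _ _ _ ih1 ih2

theorem tleq_append_left (z : List (TLGen n)) {x y : List (TLGen n)} (h : TLEq n x y) :
    TLEq n (z ++ x) (z ++ y) := by
  induction h with
  | rel a b hab =>
      obtain ⟨u, v, p, q, hr, rfl, rfl⟩ := hab
      exact Relation.EqvGen.rel _ _ ⟨z ++ u, v, p, q, hr, by simp, by simp⟩
  | refl a => exact Relation.EqvGen.refl _
  | symm a b _ ih => exact Relation.EqvGen.symm _ _ ih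
  | trans a b c _ _ ih1 ih2 => exact Relation.EqvGen.trans _ _ _ ih1 ih2

theorem tleq_congr {x x' y y' : List (TLGen n)} (h1 : TLEq n x x') (h2 : TLEq n y y') :
    TLEq n (x ++ y) (x' ++ y') :=
  tleq_trans (tleq_append_right h1 y) (tleq_append_left x' h2)

/-- the `i`-th generator as a letter (junk value `τ` if out of range). -/
def el (n i : ℕ) : TLGen n := if h : i < n - 1 then Sum.inl ⟨i, h⟩ else tau n

theorem el_eq {i : ℕ} (h : i < n - 1) : el n i = Sum.inl ⟨i, h⟩ := dif_pos h

theorem el_eq_inl {m : ℕ} {i : Fin (n - 1)} (h : el n m = Sum.inl i) :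
    (i : ℕ) = m ∧ m < n - 1 := by
  by_cases hm : m < n - 1
  · rw [el_eq hm] at h
    cases h
    exact ⟨rfl, hm⟩
  · rw [el, dif_neg hm] at h
    cases h

theorem swap_tau (x : TLGen n) : TLEq n [x, tau n] [tau n, x] := by
  cases x with
  | inl i => simpa using tleq_of_rel [] [] (TLRel.commTau i)
  | inr u => cases u; exact tleq_rfl _

theorem swap_far {i j : ℕ} (hi : i < n - 1) (hj : j < n - 1)
    (hfar : i + 1 < j ∨ j + 1 < i) :
    TLEq n [el n i, el n j] [el n j, el n i] := by
  rw [el_eq hi, el_eq hj]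
  simpa using tleq_of_rel [] [] (TLRel.comm ⟨i, hi⟩ ⟨j, hj⟩ hfar)

theorem braid_tleq {k : ℕ} (hk : k + 1 < n - 1) :
    TLEq n [el n k, el n (k + 1), el n k] [el n k] := by
  rw [el_eq (by omega : k < n - 1), el_eq hk]
  simpa using tleq_of_rel [] []
    (TLRel.braid ⟨k, by omega⟩ ⟨k + 1, hk⟩ (Or.inr rfl))

theorem square_tleq {k : ℕ} (hk : k < n - 1) :
    TLEq n [el n k, el n k] [tau n, el n k] := by
  rw [el_eq hk]
  simpa using tleq_of_rel [] [] (TLRel.square ⟨k, hk⟩)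

theorem letter_pass {g : TLGen n} : ∀ {u : List (TLGen n)},
    (∀ y ∈ u, TLEq n [g, y] [y, g]) → TLEq n (g :: u) (u ++ [g])
  | [], _ => tleq_rfl _
  | y :: u, H => by
      have h1 : TLEq n (g :: y :: u) (y :: g :: u) :=
        tleq_append_right (H y (by simp)) u
      refine tleq_trans h1 ?_
      exact tleq_append_left [y] (letter_pass fun z hz => H z (by simp [hz]))

theorem block_pass : ∀ {u v : List (TLGen n)},
    (∀ x ∈ u, ∀ y ∈ v, TLEq n [x, y] [y, x]) → TLEq n (u ++ v) (v ++ u)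
  | [], v, _ => by simpa using tleq_rfl v
  | x :: u, v, H => by
      have h1 : TLEq n (x :: (u ++ v)) (x :: (v ++ u)) :=
        tleq_append_left [x] (block_pass fun a ha b hb => H a (by simp [ha]) b hb)
      refine tleq_trans h1 ?_
      have h2 : TLEq n (x :: v) (v ++ [x]) :=
        letter_pass fun y hy => H x (by simp) y hy
      have h3 := tleq_append_right h2 u
      simpa using h3

theorem tau_pull (p : ℕ) (u v : List (TLGen n)) :
    TLEq n (u ++ (List.replicate p (tau n) ++ v)) (List.replicate p (tau n) ++ (u ++ v)) := by
  have h1 : TLEq n (u ++ List.replicate p (tau n)) (List.replicate p (tau n) ++ u) :=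
    block_pass fun x _ y hy => by
      rw [List.eq_of_mem_replicate hy]; exact swap_tau x
  have := tleq_append_right h1 v
  simpa using this

end JonesNF

namespace JonesNF
open List
variable {n : ℕ}

/-- word `e_b e_{b-1} ⋯` of length `len`. -/
def runW (n b len : ℕ) : List (TLGen n) := (List.range len).map fun t => el n (b - t)

/-- word `e_b e_{b-1} ⋯ e_k` (empty if `k > b`). -/
def W (n b k : ℕ) : List (TLGen n) := runW n b (b + 1 - k)

theorem runW_zero (b : ℕ) : runW n b 0 = [] := rfl

theorem runW_one (b : ℕ) : runW n b 1 = [el n b] := rfl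

theorem runW_succ_cons (b l : ℕ) : runW n b (l + 1) = el n b :: runW n (b - 1) l := by
  rw [runW, List.range_succ_eq_map]
  simp only [List.map_cons, Nat.sub_zero, List.map_map, runW]
  congr 1
  apply List.map_congr_left
  intro t _
  simp only [Function.comp_apply, Nat.succ_eq_add_one]
  congr 1
  omega

theorem runW_add (b l1 l2 : ℕ) :
    runW n b (l1 + l2) = runW n b l1 ++ runW n (b - l1) l2 := by
  rw [runW, List.range_add, List.map_append]
  congr 1
  rw [runW, List.map_map]
  apply List.map_congr_left
  intro t _
  simp only [Function.comp_apply]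
  congr 1
  omega

theorem W_nil {b k : ℕ} (h : b < k) : W n b k = [] := by
  rw [W, show b + 1 - k = 0 by omega, runW_zero]

theorem W_self (b : ℕ) : W n b b = [el n b] := by
  rw [W, show b + 1 - b = 1 by omega, runW_one]

theorem W_cons {b k : ℕ} (h : k ≤ b) :
    W n b k = el n b :: runW n (b - 1) (b - k) := by
  rw [W, show b + 1 - k = (b - k) + 1 by omega, runW_succ_cons]

theorem W_cons_succ {k j : ℕ} (h : j ≤ k + 1) :
    W n (k + 1) j = el n (k + 1) :: W n k j := by
  rw [W_cons h, W]
  congr 2 <;> omega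

theorem W_split {j k b : ℕ} (hjk : j ≤ k) (hkb : k ≤ b) :
    W n b j = W n b (k + 1) ++ W n k j := by
  rw [W, show b + 1 - j = (b - k) + (k + 1 - j) by omega, runW_add, W, W,
    show b + 1 - (k + 1) = b - k by omega, show b - (b - k) = k by omega]

theorem mem_W {x : TLGen n} {b k : ℕ} (h : x ∈ W n b k) :
    ∃ m, k ≤ m ∧ m ≤ b ∧ x = el n m := by
  rw [W, runW] at h
  obtain ⟨t, ht, rfl⟩ := List.mem_map.1 h
  rw [List.mem_range] at ht
  exact ⟨b - t, by omega, by omega, rfl⟩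

/-- `e_k` moves from the left of `e_b ⋯ e_j` (for `j ≤ k < b`). -/
theorem step1 {j k b : ℕ} (hjk : j ≤ k) (hkb : k < b) (hb : b < n - 1) :
    TLEq n (el n k :: W n b j) (W n b (k + 2) ++ W n k j) := by
  have hsplit : W n b j = W n b (k + 2) ++ W n (k + 1) j :=
    W_split (n := n) (by omega) (by omega)
  have hcons : W n (k + 1) j = el n (k + 1) :: W n k j := W_cons_succ (by omega)
  rw [hsplit, hcons]
  -- move `el k` across `W b (k+2)`
  have hpass : TLEq n (el n k :: W n b (k + 2)) (W n b (k + 2) ++ [el n k]) := by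
    apply letter_pass
    intro y hy
    obtain ⟨m, hm1, hm2, rfl⟩ := mem_W hy
    exact swap_far (by omega) (by omega) (Or.inl (by omega))
  have h1 : TLEq n (el n k :: (W n b (k + 2) ++ el n (k + 1) :: W n k j))
      ((W n b (k + 2) ++ [el n k]) ++ el n (k + 1) :: W n k j) := by
    have := tleq_append_right hpass (el n (k + 1) :: W n k j)
    simpa using this
  refine tleq_trans h1 ?_
  -- now braid:  e_k e_{k+1} e_k  ~  e_k
  have hWkj : W n k j = el n k :: runW n (k - 1) (k - j) := W_cons hjk
  have hbraid : TLEq n ([el n k, el n (k + 1)] ++ W n k j)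
      ([el n k] ++ runW n (k - 1) (k - j)) := by
    rw [hWkj]
    have := tleq_append_right (braid_tleq (by omega : k + 1 < n - 1)) (runW n (k - 1) (k - j))
    simpa using this
  have h2 := tleq_append_left (W n b (k + 2)) hbraid
  have h3 : TLEq n (W n b (k + 2) ++ ([el n k] ++ runW n (k - 1) (k - j)))
      (W n b (k + 2) ++ W n k j) := by rw [hWkj]; exact tleq_rfl _
  have h4 : TLEq n ((W n b (k + 2) ++ [el n k]) ++ el n (k + 1) :: W n k j)
      (W n b (k + 2) ++ ([el n k, el n (k + 1)] ++ W n k j)) := by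
    simp only [List.append_assoc, List.cons_append, List.nil_append]
    exact tleq_rfl _
  exact tleq_trans h4 (tleq_trans h2 h3)

/-- The key swap identity: `E(a,k)E(b,j) = E(a,j)E(b,k+2)` for `j ≤ k ≤ a < b`. -/
theorem key {j k a b : ℕ} (hjk : j ≤ k) (hka : k ≤ a) (hab : a < b) (hb : b < n - 1) :
    TLEq n (W n a k ++ W n b j) (W n a j ++ W n b (k + 2)) := by
  have hsplit : W n a k = W n a (k + 1) ++ [el n k] := by
    rw [W_split (le_refl k) hka, W_self]
  rw [hsplit]
  have h1 : TLEq n ((W n a (k + 1) ++ [el n k]) ++ W n b j)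
      (W n a (k + 1) ++ (W n b (k + 2) ++ W n k j)) := by
    have := tleq_append_left (W n a (k + 1)) (step1 hjk (by omega) hb)
    simpa using this
  refine tleq_trans h1 ?_
  -- commute the blocks `W b (k+2)` and `W k j`
  have hblock : TLEq n (W n b (k + 2) ++ W n k j) (W n k j ++ W n b (k + 2)) := by
    apply block_pass
    intro x hx y hy
    obtain ⟨mx, hx1, hx2, rfl⟩ := mem_W hx
    obtain ⟨my, hy1, hy2, rfl⟩ := mem_W hy
    exact swap_far (by omega) (by omega) (Or.inr (by omega))
  have h2 := tleq_append_left (W n a (k + 1)) hblock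
  refine tleq_trans h2 ?_
  rw [← List.append_assoc, ← W_split hjk (by omega)]
  exact tleq_rfl _

end JonesNF

namespace JonesNF
open List
variable {n : ℕ}

def flatW (n : ℕ) (runs : List (ℕ × ℕ)) : List (TLGen n) :=
  (runs.map fun r => W n r.1 r.2).flatten

def isNF (n : ℕ) (runs : List (ℕ × ℕ)) : Prop :=
  runs.Pairwise (fun r s => r.1 < s.1 ∧ r.2 < s.2) ∧
    ∀ r ∈ runs, r.2 ≤ r.1 ∧ r.1 < n - 1

theorem flatW_nil : flatW n [] = [] := rfl

theorem flatW_append (u v : List (ℕ × ℕ)) :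
    flatW n (u ++ v) = flatW n u ++ flatW n v := by
  simp [flatW]

theorem flatW_concat (u : List (ℕ × ℕ)) (r : ℕ × ℕ) :
    flatW n (u ++ [r]) = flatW n u ++ W n r.1 r.2 := by
  simp [flatW]

theorem isNF_nil : isNF n [] := ⟨List.Pairwise.nil, by simp⟩

theorem isNF_append_left {u v : List (ℕ × ℕ)} (h : isNF n (u ++ v)) : isNF n u :=
  ⟨(List.pairwise_append.1 h.1).1, fun r hr => h.2 r (by simp [hr])⟩

theorem mem_flatW {x : TLGen n} {runs : List (ℕ × ℕ)} (h : x ∈ flatW n runs) :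
    ∃ r ∈ runs, ∃ m, r.2 ≤ m ∧ m ≤ r.1 ∧ x = el n m := by
  rw [flatW] at h
  obtain ⟨l, hl, hx⟩ := List.mem_flatten.1 h
  obtain ⟨r, hr, rfl⟩ := List.mem_map.1 hl
  obtain ⟨m, h1, h2, rfl⟩ := mem_W hx
  exact ⟨r, hr, m, h1, h2, rfl⟩

/-- Move a high generator `e_h` from the left across a flattened NF all of
whose letters have index `≤ h - 2`. -/
theorem pass_high {h : ℕ} (hh : h < n - 1) {runs : List (ℕ × ℕ)}
    (hnf : isNF n runs) (tops : ∀ r ∈ runs, r.1 + 1 < h) :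
    TLEq n (el n h :: flatW n runs) (flatW n runs ++ [el n h]) := by
  apply letter_pass
  intro y hy
  obtain ⟨r, hr, m, _, hm2, rfl⟩ := mem_flatW hy
  have := tops r hr
  have := (hnf.2 r hr).2
  exact swap_far hh (by omega) (Or.inr (by omega))

/-- Appending a run `E(b, j)` with big top `b` to an NF word. -/
theorem appendBig : ∀ (runs : List (ℕ × ℕ)) (b j B : ℕ),
    isNF n runs → (∀ r ∈ runs, r.1 < b) → (∀ r ∈ runs, r.2 < B) → j ≤ b → b < n - 1 →
    ∃ runs', isNF n runs' ∧ (∀ r ∈ runs', r.1 ≤ b) ∧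
      (∀ r ∈ runs', r.2 ≤ j ∨ r.2 < B + 2) ∧
      TLEq n (flatW n runs ++ W n b j) (flatW n runs') := by
  intro runs
  induction runs using List.reverseRecOn with
  | nil =>
      intro b j B _ _ _ hjb hb
      refine ⟨[(b, j)], ⟨by simp, by simp [hjb, hb]⟩, by simp, by simp, ?_⟩
      simp only [flatW, List.map_cons, List.map_nil, List.flatten_cons, List.flatten_nil,
        List.append_nil, List.nil_append]
      exact tleq_rfl _
  | append_singleton init r IH =>
      intro b j B hnf htops hbots hjb hb
      obtain ⟨a, k⟩ := r
      have hak : k ≤ a ∧ a < n - 1 := hnf.2 (a, k) (by simp)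
      have hinit_lt : ∀ s ∈ init, s.1 < a ∧ s.2 < k := by
        intro s hs
        exact (List.pairwise_append.1 hnf.1).2.2 s hs (a, k) (by simp)
      by_cases hkj : k < j
      · -- simply append
        refine ⟨init ++ [(a, k)] ++ [(b, j)], ?_, ?_, ?_, ?_⟩
        · constructor
          · rw [List.pairwise_append]
            refine ⟨hnf.1, by simp, ?_⟩
            intro s hs t ht
            simp at ht; subst ht
            rcases List.mem_append.1 hs with hs | hs
            · have := hinit_lt s hs
              have := htops s (by simp [hs])
              constructor <;> omega
            · simp at hs; subst hs
              exact ⟨htops _ (by simp), hkj⟩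
          · intro s hs
            rcases List.mem_append.1 hs with hs | hs
            · exact hnf.2 s hs
            · simp at hs; subst hs; exact ⟨hjb, hb⟩
        · intro s hs
          rcases List.mem_append.1 hs with hs | hs
          · exact le_of_lt (htops s hs)
          · simp at hs; subst hs; rfl
        · intro s hs
          rcases List.mem_append.1 hs with hs | hs
          · exact Or.inr (by have := hbots s hs; omega)
          · simp at hs; subst hs; exact Or.inl le_rfl
        · rw [flatW_concat (init ++ [(a, k)]) (b, j)]
          exact tleq_rfl _
      · -- k ≥ j : use the key identity
        push_neg at hkj
        have hkB : k < B := hbots (a, k) (by simp)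
        have hab : a < b := htops (a, k) (by simp)
        obtain ⟨runs₁, hnf₁, htop₁, hbot₁, heq₁⟩ :=
          IH a j k (isNF_append_left hnf)
            (fun s hs => (hinit_lt s hs).1)
            (fun s hs => (hinit_lt s hs).2)
            (le_trans hkj hak.1) hak.2
        have hbot₁' : ∀ s ∈ runs₁, s.2 ≤ k + 1 := by
          intro s hs
          rcases hbot₁ s hs with h | h <;> omega
        have hkey : TLEq n (flatW n (init ++ [(a, k)]) ++ W n b j)
            (flatW n init ++ (W n a j ++ W n b (k + 2))) := by
          rw [flatW_concat]
          have := tleq_append_left (flatW n init) (key hkj hak.1 hab hb)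
          simpa [List.append_assoc] using this
        have heq₂ : TLEq n (flatW n init ++ W n a j ++ W n b (k + 2))
            (flatW n runs₁ ++ W n b (k + 2)) := tleq_append_right heq₁ _
        by_cases hk2 : k + 2 ≤ b
        · refine ⟨runs₁ ++ [(b, k + 2)], ?_, ?_, ?_, ?_⟩
          · constructor
            · rw [List.pairwise_append]
              refine ⟨hnf₁.1, by simp, ?_⟩
              intro s hs t ht
              simp at ht; subst ht
              have h1 := htop₁ s hs
              have h2 := hbot₁' s hs
              constructor <;> omega
            · intro s hs
              rcases List.mem_append.1 hs with hs | hs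
              · exact hnf₁.2 s hs
              · simp at hs; subst hs; exact ⟨hk2, hb⟩
          · intro s hs
            rcases List.mem_append.1 hs with hs | hs
            · have := htop₁ s hs; omega
            · simp at hs; subst hs; rfl
          · intro s hs
            rcases List.mem_append.1 hs with hs | hs
            · exact Or.inr (by have := hbot₁' s hs; omega)
            · simp at hs; subst hs; exact Or.inr (by simp only []; omega)
          · refine tleq_trans hkey ?_
            rw [flatW_concat]
            refine tleq_trans ?_ heq₂
            rw [List.append_assoc]
            exact tleq_rfl _
        · -- the new run is empty
          refine ⟨runs₁, hnf₁, fun s hs => le_of_lt (lt_of_le_of_lt (htop₁ s hs) hab),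
            fun s hs => Or.inr (by have := hbot₁' s hs; omega), ?_⟩
          refine tleq_trans hkey ?_
          rw [W_nil (by omega : b < k + 2)] at heq₂ ⊢
          simp only [List.append_nil] at heq₂
          refine tleq_trans ?_ heq₂
          simp only [List.append_nil]
          exact tleq_rfl _

end JonesNF

namespace JonesNF
open List
variable {n : ℕ}

theorem tleq_of_eq {x y : List (TLGen n)} (h : x = y) : TLEq n x y := h ▸ tleq_rfl x

theorem braid_tleq' {k : ℕ} (hk : k + 1 < n - 1) :
    TLEq n [el n (k + 1), el n k, el n (k + 1)] [el n (k + 1)] := by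
  rw [el_eq (by omega : k < n - 1), el_eq hk]
  simpa using tleq_of_rel [] []
    (TLRel.braid ⟨k + 1, hk⟩ ⟨k, by omega⟩ (Or.inl rfl))

theorem mem_runW {x : TLGen n} {b l : ℕ} (h : x ∈ runW n b l) :
    ∃ t, t < l ∧ x = el n (b - t) := by
  rw [runW] at h
  obtain ⟨t, ht, rfl⟩ := List.mem_map.1 h
  exact ⟨t, List.mem_range.1 ht, rfl⟩

def Bnd (n h : ℕ) (w : List (TLGen n)) : Prop :=
  ∀ i : Fin (n - 1), Sum.inl i ∈ w → (i : ℕ) < h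

theorem bnd_flatW {h : ℕ} {runs : List (ℕ × ℕ)} (tops : ∀ r ∈ runs, r.1 < h) :
    Bnd n h (flatW n runs) := by
  intro i hi
  obtain ⟨r, hr, m, _, hm2, hx⟩ := mem_flatW hi
  obtain ⟨him, _⟩ := el_eq_inl hx.symm
  have := tops r hr
  omega

theorem bnd_runW {h b l : ℕ} (hb : b < h) : Bnd n h (runW n b l) := by
  intro i hi
  obtain ⟨t, ht, hx⟩ := mem_runW hi
  obtain ⟨him, _⟩ := el_eq_inl hx.symm
  omega

/-- Lemma E : absorb `e_h` on the left of a flattened NF with tops `< h`. -/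
theorem insert_high {h : ℕ} (hh : h < n - 1) {RB : List (ℕ × ℕ)} (hnf : isNF n RB)
    (tops : ∀ r ∈ RB, r.1 < h) :
    ∃ RB'' j0, isNF n RB'' ∧ (∀ r ∈ RB'', r.1 < h) ∧ j0 ≤ h ∧
      TLEq n (el n h :: flatW n RB) (flatW n RB'' ++ W n h j0) := by
  rcases List.eq_nil_or_concat RB with rfl | ⟨RB', r, rfl⟩
  · refine ⟨[], h, isNF_nil, by simp, le_rfl, ?_⟩
    rw [W_self, flatW_nil]
    exact tleq_rfl _
  · rw [List.concat_eq_append] at *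
    obtain ⟨a, k⟩ := r
    have hak : k ≤ a ∧ a < n - 1 := hnf.2 (a, k) (by simp)
    have hlt : ∀ s ∈ RB', s.1 < a ∧ s.2 < k :=
      fun s hs => (List.pairwise_append.1 hnf.1).2.2 s hs (a, k) (by simp)
    have ha : a < h := tops (a, k) (by simp)
    by_cases hah : a + 1 = h
    · refine ⟨RB', k, isNF_append_left hnf,
        (fun s hs => by have := (hlt s hs).1; omega), by omega, ?_⟩
      have hpass : TLEq n (el n h :: flatW n RB') (flatW n RB' ++ [el n h]) :=
        pass_high hh (isNF_append_left hnf)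
          (fun s hs => by have := (hlt s hs).1; omega)
      have h1 : TLEq n ((el n h :: flatW n RB') ++ W n a k)
          ((flatW n RB' ++ [el n h]) ++ W n a k) := tleq_append_right hpass _
      have hW : el n h :: W n a k = W n h k := by
        rw [← hah, W_cons_succ (by omega : k ≤ a + 1)]
      refine tleq_trans (tleq_of_eq ?_) (tleq_trans h1 (tleq_of_eq ?_))
      · rw [flatW_concat]
        simp
      · rw [← hW]
        simp
    · have hpass : TLEq n (el n h :: flatW n (RB' ++ [(a, k)]))
          (flatW n (RB' ++ [(a, k)]) ++ [el n h]) := by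
        apply pass_high hh hnf
        intro s hs
        rcases List.mem_append.1 hs with hs | hs
        · have := (hlt s hs).1; omega
        · simp at hs; subst hs; omega
      refine ⟨RB' ++ [(a, k)], h, hnf, tops, le_rfl, ?_⟩
      rw [W_self]
      exact hpass

/-- Lemma F : reduce a word `e_h ⋅ C ⋅ e_h` with `C` a flattened NF with tops `< h`. -/
theorem squeeze_high {h : ℕ} (hh : h < n - 1) {RC : List (ℕ × ℕ)} (hnf : isNF n RC)
    (tops : ∀ r ∈ RC, r.1 < h) :
    ∃ q u v, TLEq n (el n h :: (flatW n RC ++ [el n h]))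
        (List.replicate q (tau n) ++ (u ++ el n h :: v)) ∧
      Bnd n h u ∧ Bnd n h v := by
  rcases List.eq_nil_or_concat RC with rfl | ⟨RC', r, rfl⟩
  · refine ⟨1, [], [], ?_, ?_, ?_⟩
    · simpa [flatW_nil] using square_tleq hh
    · intro i hi; cases hi
    · intro i hi; cases hi
  · rw [List.concat_eq_append] at *
    obtain ⟨a, k⟩ := r
    have hak : k ≤ a ∧ a < n - 1 := hnf.2 (a, k) (by simp)
    have hlt : ∀ s ∈ RC', s.1 < a ∧ s.2 < k :=
      fun s hs => (List.pairwise_append.1 hnf.1).2.2 s hs (a, k) (by simp)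
    have ha : a < h := tops (a, k) (by simp)
    by_cases hah : a + 1 = h
    · -- e_h (flat RC') e_a (tail) e_h  ~  (flat RC') e_h (tail)
      refine ⟨0, flatW n RC', runW n (a - 1) (a - k), ?_,
        bnd_flatW (fun s hs => by have := (hlt s hs).1; omega),
        bnd_runW (by omega)⟩
      have hWak : W n a k = el n a :: runW n (a - 1) (a - k) := W_cons hak.1
      have hpass : TLEq n (el n h :: flatW n RC') (flatW n RC' ++ [el n h]) :=
        pass_high hh (isNF_append_left hnf)
          (fun s hs => by have := (hlt s hs).1; omega)
      -- move right e_h left across the tail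
      have hpass2 : TLEq n (el n h :: runW n (a - 1) (a - k))
          (runW n (a - 1) (a - k) ++ [el n h]) := by
        apply letter_pass
        intro y hy
        obtain ⟨t, ht, rfl⟩ := mem_runW hy
        exact swap_far hh (by omega) (Or.inr (by omega))
      have hbraid : TLEq n [el n h, el n a, el n h] [el n h] := by
        rw [← hah]
        exact braid_tleq' (by omega)
      -- assemble
      have s2 : TLEq n (el n a :: (runW n (a - 1) (a - k) ++ [el n h]))
          (el n a :: (el n h :: runW n (a - 1) (a - k)))  :=
        tleq_append_left [el n a] (tleq_symm hpass2)
      have s3 := tleq_append_left (flatW n RC')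
        (tleq_append_right hbraid (runW n (a - 1) (a - k)))
      refine tleq_trans (tleq_of_eq ?_)
        (tleq_trans (tleq_append_right hpass (el n a :: (runW n (a - 1) (a - k) ++ [el n h])))
          (tleq_trans (tleq_append_left (flatW n RC' ++ [el n h]) s2)
            (tleq_trans (tleq_of_eq ?_) (tleq_trans s3 (tleq_of_eq ?_)))))
      · rw [flatW_concat, hWak]; simp
      · simp
      · simp
    · -- commute e_h past everything; square
      have hpass : TLEq n (el n h :: flatW n (RC' ++ [(a, k)]))
          (flatW n (RC' ++ [(a, k)]) ++ [el n h]) := by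
        apply pass_high hh hnf
        intro s hs
        rcases List.mem_append.1 hs with hs | hs
        · have := (hlt s hs).1; omega
        · simp at hs; subst hs; omega
      refine ⟨1, flatW n (RC' ++ [(a, k)]), [], ?_, bnd_flatW tops, by intro i hi; cases hi⟩
      have s1 := tleq_append_right hpass [el n h]
      refine tleq_trans (by simpa [List.append_assoc] using s1) ?_
      have s2 := tleq_append_left (flatW n (RC' ++ [(a, k)]))
        (square_tleq (by omega : h < n - 1))
      refine tleq_trans (by simpa [List.append_assoc] using s2) ?_
      have s3 := tau_pull 1 (flatW n (RC' ++ [(a, k)])) [el n h]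
      simpa using s3
end JonesNF

instance {α β : Type*} [BEq α] [LawfulBEq α] [BEq β] [LawfulBEq β] : LawfulBEq (Sum α β) where
  eq_of_beq {a b} h := by
    cases a with
    | inl x =>
        cases b with
        | inl y => have hx : (x == y) = true := h; rw [eq_of_beq hx]
        | inr y => cases h
    | inr x =>
        cases b with
        | inl y => cases h
        | inr y => have hx : (x == y) = true := h; rw [eq_of_beq hx]
  rfl {a} := by
    cases a with
    | inl x => exact (beq_self_eq_true x : (x == x) = true)
    | inr x => exact (beq_self_eq_true x : (x == x) = true)

namespace JonesNF
open List
variable {n : ℕ}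

def nfw (n p : ℕ) (runs : List (ℕ × ℕ)) : List (TLGen n) :=
  List.replicate p (tau n) ++ flatW n runs

theorem first_occ {α : Type*} {a : α} {l : List α} (h : a ∈ l) :
    ∃ s t, l = s ++ a :: t ∧ a ∉ s := by
  induction l with
  | nil => cases h
  | cons b l IH =>
      by_cases hb : a = b
      · exact ⟨[], l, by simp [hb], by simp⟩
      · have hl : a ∈ l := by
          rcases List.mem_cons.1 h with h' | h'
          · exact absurd h' hb
          · exact h'
        obtain ⟨s, t, rfl, hs⟩ := IH hl
        exact ⟨b :: s, t, rfl, by simp [hs, hb]⟩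

theorem bnd_lower {h : ℕ} (hh : h < n - 1) {u : List (TLGen n)}
    (hu : Bnd n (h + 1) u) (hne : el n h ∉ u) : Bnd n h u := by
  intro i hi
  have h1 := hu i hi
  have : (i : ℕ) ≠ h := by
    intro hih
    apply hne
    rw [el_eq hh]
    have he : (⟨h, hh⟩ : Fin (n - 1)) = i := Fin.ext hih.symm
    rw [he]; exact hi
  omega

set_option maxRecDepth 8192 in
theorem main (h : ℕ) (w : List (TLGen n)) (hw : Bnd n h w) :
    ∃ p runs, isNF n runs ∧ (∀ r ∈ runs, r.1 < h) ∧ TLEq n w (nfw n p runs) := by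
  induction h generalizing w with
  | zero =>
      refine ⟨w.length, [], isNF_nil, by simp, ?_⟩
      have hrep : w = List.replicate w.length (tau n) := by
        rw [List.eq_replicate_length]
        intro x hx
        cases x with
        | inl i => exact absurd (hw i hx) (Nat.not_lt_zero _)
        | inr u => cases u; rfl
      rw [nfw, flatW_nil, List.append_nil, ← hrep]
      exact tleq_rfl _
  | succ h IH =>
      by_cases hh : h < n - 1
      · -- main case: strong induction on the number of occurrences of e_h
        suffices S : ∀ c (w : List (TLGen n)), List.count (el n h) w = c → Bnd n (h + 1) w →
            ∃ p runs, isNF n runs ∧ (∀ r ∈ runs, r.1 < h + 1) ∧ TLEq n w (nfw n p runs) from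
          S _ w rfl hw
        intro c
        induction c using Nat.strong_induction_on with
        | _ c IHc =>
        intro w hc hw
        rcases Nat.eq_zero_or_pos c with rfl | hcpos
        · -- no occurrence of e_h : use IH for h
          have hnotmem : el n h ∉ w := List.count_eq_zero.1 hc
          obtain ⟨p, runs, h1, h2, h3⟩ := IH w (bnd_lower hh hw hnotmem)
          exact ⟨p, runs, h1, fun r hr => Nat.lt_succ_of_lt (h2 r hr), h3⟩
        · have hmem : el n h ∈ w := List.count_pos_iff.1 (by omega)
          obtain ⟨A, B, rfl, hA⟩ := first_occ hmem
          have hcA : List.count (el n h) A = 0 := List.count_eq_zero.2 hA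
          have hbndA : Bnd n h A :=
            bnd_lower hh (fun i hi => hw i (by simp [hi])) hA
          obtain ⟨pA, RA, nfA, topsA, eqA⟩ := IH A hbndA
          by_cases hB0 : List.count (el n h) B = 0
          · -- exactly one occurrence
            have hbndB : Bnd n h B :=
              bnd_lower hh (fun i hi => hw i (by simp [hi])) (List.count_eq_zero.1 hB0)
            obtain ⟨pB, RB, nfB, topsB, eqB⟩ := IH B hbndB
            obtain ⟨RB'', j0, nfB'', topsB'', hj0, eqE⟩ := insert_high hh nfB topsB
            have hbndAB : Bnd n h (flatW n (RA ++ RB'')) := by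
              apply bnd_flatW
              intro r hr
              rcases List.mem_append.1 hr with hr | hr
              · exact topsA r hr
              · exact topsB'' r hr
            obtain ⟨q, RC, nfC, topsC, eqC⟩ := IH (flatW n (RA ++ RB'')) hbndAB
            obtain ⟨runs', nf', tops', _, eqD⟩ := appendBig RC h j0 n nfC topsC
              (fun r hr => by have h1 := (nfC.2 r hr).1; have h2 := (nfC.2 r hr).2; omega)
              hj0 hh
            refine ⟨pB + (pA + q), runs', nf',
              (fun r hr => Nat.lt_succ_of_le (tops' r hr)), ?_⟩
            have t1 : TLEq n (A ++ el n h :: B)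
                ((List.replicate pA (tau n) ++ flatW n RA) ++
                  (el n h :: (List.replicate pB (tau n) ++ flatW n RB))) := by
              have := tleq_congr eqA (tleq_append_left [el n h] eqB)
              simpa [nfw] using this
            refine tleq_trans t1 ?_
            have t2 : TLEq n
                ((List.replicate pA (tau n) ++ flatW n RA) ++
                  (el n h :: (List.replicate pB (tau n) ++ flatW n RB)))
                (List.replicate pB (tau n) ++ (List.replicate pA (tau n) ++
                  (flatW n RA ++ (el n h :: flatW n RB)))) := by
              have := tau_pull pB ((List.replicate pA (tau n) ++ flatW n RA) ++ [el n h])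
                (flatW n RB)
              refine tleq_trans (tleq_of_eq ?_) (tleq_trans this (tleq_of_eq ?_)) <;> simp
            refine tleq_trans t2 ?_
            have t3 : TLEq n
                (List.replicate pB (tau n) ++ (List.replicate pA (tau n) ++
                  (flatW n RA ++ (el n h :: flatW n RB))))
                (List.replicate pB (tau n) ++ (List.replicate pA (tau n) ++
                  (flatW n RA ++ (flatW n RB'' ++ W n h j0)))) :=
              tleq_append_left _ (tleq_append_left _ (tleq_append_left _ eqE))
            refine tleq_trans t3 ?_
            have t4 : TLEq n
                (List.replicate pB (tau n) ++ (List.replicate pA (tau n) ++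
                  (flatW n RA ++ (flatW n RB'' ++ W n h j0))))
                (List.replicate pB (tau n) ++ (List.replicate pA (tau n) ++
                  ((List.replicate q (tau n) ++ flatW n RC) ++ W n h j0))) := by
              refine tleq_append_left _ (tleq_append_left _ ?_)
              have eC : TLEq n (flatW n (RA ++ RB''))
                  (List.replicate q (tau n) ++ flatW n RC) := by simpa [nfw] using eqC
              refine tleq_trans (tleq_of_eq ?_) (tleq_append_right eC (W n h j0))
              simp [flatW_append, List.append_assoc]
            refine tleq_trans t4 ?_
            have t5 : TLEq n
                (List.replicate pB (tau n) ++ (List.replicate pA (tau n) ++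
                  ((List.replicate q (tau n) ++ flatW n RC) ++ W n h j0)))
                (List.replicate pB (tau n) ++ (List.replicate pA (tau n) ++
                  (List.replicate q (tau n) ++ flatW n runs'))) := by
              refine tleq_append_left _ (tleq_append_left _ ?_)
              refine tleq_trans (tleq_of_eq (List.append_assoc _ _ _)) ?_
              exact tleq_append_left _ eqD
            refine tleq_trans t5 (tleq_of_eq ?_)
            rw [nfw, List.replicate_add, List.replicate_add]
            simp only [List.append_assoc]
          · -- at least two occurrences
            have hmemB : el n h ∈ B := List.count_pos_iff.1 (by omega)
            obtain ⟨C, B₂, rfl, hC⟩ := first_occ hmemB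
            have hbndC : Bnd n h C :=
              bnd_lower hh (fun i hi => hw i (by simp [hi])) hC
            obtain ⟨q, RC, nfC, topsC, eqC⟩ := IH C hbndC
            obtain ⟨q', u, v, eqF, bndu, bndv⟩ := squeeze_high hh nfC topsC
            have hu0 : List.count (el n h) u = 0 := by
              apply List.count_eq_zero.2
              intro hmu
              have : h < h := by simpa using bndu ⟨h, hh⟩ (by rwa [← el_eq hh])
              omega
            have hv0 : List.count (el n h) v = 0 := by
              apply List.count_eq_zero.2
              intro hmv
              have : h < h := by simpa using bndv ⟨h, hh⟩ (by rwa [← el_eq hh])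
              omega
            have htne : (tau n : TLGen n) ≠ el n h := by
              rw [el_eq hh]; simp [tau]
            -- the new word
            set w' := A ++ (List.replicate q (tau n) ++ (List.replicate q' (tau n) ++
              (u ++ (el n h :: (v ++ B₂))))) with hw'def
            have heqw : TLEq n (A ++ el n h :: (C ++ el n h :: B₂)) w' := by
              have s1 : TLEq n (A ++ el n h :: (C ++ el n h :: B₂))
                  (A ++ (el n h :: ((List.replicate q (tau n) ++ flatW n RC) ++
                    (el n h :: B₂)))) := by
                refine tleq_append_left A (tleq_append_left [el n h] ?_)
                exact tleq_append_right (by simpa [nfw] using eqC) (el n h :: B₂)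
              refine tleq_trans s1 ?_
              have s2 : TLEq n (el n h :: (List.replicate q (tau n) ++
                    (flatW n RC ++ (el n h :: B₂))))
                  (List.replicate q (tau n) ++ (el n h :: (flatW n RC ++
                    (el n h :: B₂)))) := by
                have := tau_pull q [el n h] (flatW n RC ++ (el n h :: B₂))
                refine tleq_trans (tleq_of_eq ?_) (tleq_trans this (tleq_of_eq ?_)) <;> simp
              have s2' := tleq_append_left A s2
              refine tleq_trans (tleq_trans (tleq_of_eq ?_) s2') ?_
              · simp [List.append_assoc]
              have s3 : TLEq n ((el n h :: (flatW n RC ++ [el n h])) ++ B₂)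
                  ((List.replicate q' (tau n) ++ (u ++ el n h :: v)) ++ B₂) :=
                tleq_append_right eqF B₂
              have s3' := tleq_append_left (A ++ List.replicate q (tau n)) s3
              refine tleq_trans (tleq_trans (tleq_of_eq ?_) s3') (tleq_of_eq ?_) <;>
                simp [hw'def, List.append_assoc]
            have hcw' : List.count (el n h) w' = List.count (el n h) B₂ + 1 := by
              simp [hw'def, List.count_append, List.count_cons, hcA, hu0, hv0,
                List.count_replicate, htne, beq_iff_eq]
            have hcw : List.count (el n h) B₂ + 2 = c := by
              rw [← hc]
              have hcC : List.count (el n h) C = 0 := List.count_eq_zero.2 hC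
              simp [List.count_append, List.count_cons, hcA, hcC, beq_iff_eq]
            have hbndw' : Bnd n (h + 1) w' := by
              intro i hi
              rw [hw'def] at hi
              simp only [List.mem_append, List.mem_cons, List.mem_replicate] at hi
              rcases hi with hi | ⟨-, hi⟩ | ⟨-, hi⟩ | hi | hi | hi | hi
              · exact hw i (by simp [hi])
              · cases hi
              · cases hi
              · exact Nat.lt_succ_of_lt (bndu i hi)
              · obtain ⟨hih, -⟩ := el_eq_inl hi.symm
                omega
              · exact Nat.lt_succ_of_lt (bndv i hi)
              · exact hw i (by simp [hi])
            obtain ⟨p, runs', nf', tops', eqN⟩ :=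
              IHc (List.count (el n h) B₂ + 1) (by omega) w' hcw' hbndw'
            exact ⟨p, runs', nf', tops', tleq_trans heqw eqN⟩
      · -- h ≥ n - 1 : nothing new
        obtain ⟨p, runs, h1, h2, h3⟩ := IH w (fun i hi => by
          have := hw i hi; have := i.isLt; omega)
        exact ⟨p, runs, h1, fun r hr => Nat.lt_succ_of_lt (h2 r hr), h3⟩

end JonesNF

namespace JonesNF
open List
variable {n : ℕ}

theorem run_eq_W {i j : ℕ} (hj : j ≤ i) (hi : i < n - 1) (hj2 : j < n - 1) :
    run n ⟨i, hi⟩ ⟨j, hj2⟩ = W n i j := by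
  rw [run, W, runW]
  simp only [Fin.val_mk]
  rw [show i + 1 - j = i - j + 1 by omega]
  apply List.map_congr_left
  intro t _
  rw [el_eq (show i - t < n - 1 by omega)]

end JonesNF

theorem exists_jones_normal_form' (n : ℕ) (w : List (TLGen n)) :
    ∃ (p r : ℕ) (I J : Fin r → Fin (n - 1)),
      StrictMono I ∧ StrictMono J ∧ (∀ k, J k ≤ I k) ∧
      TLEq n w
        (List.replicate p (tau n) ++ (List.ofFn fun k => run n (I k) (J k)).flatten) := by
  open JonesNF in
  obtain ⟨p, runs, hnf, _, heq⟩ := JonesNF.main (n - 1) w (fun i _ => i.isLt)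
  refine ⟨p, runs.length,
    (fun k => ⟨(runs.get k).1, (hnf.2 _ (runs.get_mem k)).2⟩),
    (fun k => ⟨(runs.get k).2,
      lt_of_le_of_lt (hnf.2 _ (runs.get_mem k)).1 (hnf.2 _ (runs.get_mem k)).2⟩),
    ?_, ?_, ?_, ?_⟩
  · intro k l hkl
    exact Fin.mk_lt_mk.2 (List.pairwise_iff_get.1 hnf.1 k l hkl).1
  · intro k l hkl
    exact Fin.mk_lt_mk.2 (List.pairwise_iff_get.1 hnf.1 k l hkl).2
  · intro k
    exact Fin.mk_le_mk.2 (hnf.2 _ (runs.get_mem k)).1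
  · have hofn : (List.ofFn fun k : Fin runs.length =>
        run n (⟨(runs.get k).1, (hnf.2 _ (runs.get_mem k)).2⟩ : Fin (n - 1))
          ⟨(runs.get k).2, lt_of_le_of_lt (hnf.2 _ (runs.get_mem k)).1
            (hnf.2 _ (runs.get_mem k)).2⟩) =
        runs.map fun r => JonesNF.W n r.1 r.2 := by
      have h1 : (List.ofFn fun k : Fin runs.length =>
          run n (⟨(runs.get k).1, (hnf.2 _ (runs.get_mem k)).2⟩ : Fin (n - 1))
            ⟨(runs.get k).2, lt_of_le_of_lt (hnf.2 _ (runs.get_mem k)).1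
              (hnf.2 _ (runs.get_mem k)).2⟩) =
          List.ofFn ((fun r => JonesNF.W n r.1 r.2) ∘ runs.get) := by
        congr 1
        funext k
        exact JonesNF.run_eq_W (hnf.2 _ (runs.get_mem k)).1 _ _
      rw [h1, ← List.map_ofFn, List.ofFn_get]
    rw [hofn]
    exact heq


/-- Every element of `M n` is equal to a word in Jones normal form
`τ^p (e_{i_1} ⋯ e_{j_1}) ⋯ (e_{i_r} ⋯ e_{j_r})` with `i_1 < ⋯ < i_r`,
`j_1 < ⋯ < j_r` and `j_k ≤ i_k`. -/
theorem exists_jones_normal_form (n : ℕ) (w : List (TLGen n)) :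
    ∃ (p r : ℕ) (I J : Fin r → Fin (n - 1)),
      StrictMono I ∧ StrictMono J ∧ (∀ k, J k ≤ I k) ∧
      TLEq n w
        (List.replicate p (tau n) ++ (List.ofFn fun k => run n (I k) (J k)).flatten) := by
  exact exists_jones_normal_form' n w
end

section
/- Each n-diagram in Jones normal form is uniquely determined by its normal form expression: if (E_{i_1}...E_{j_1})...(E_{i_r}...E_{j_r}) = (E_{i_1'}...E_{j_1'})...(E_{i_s'}...E_{j_s'}) as Temperley-Lieb diagrams, with i_1 < ... < i_r, j_1 < ... < j_r, i_1' < ... < i_s', j_1' < ... < j_s', then r = s and i_k = i_k', j_k = j_k' for all k. -/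
namespace TLDiag

variable (n : ℕ)

/-- Boundary points of an `n`-diagram: `Sum.inl` are the `n` bottom points,
`Sum.inr` the `n` top points. A diagram is a (symmetric) relation recording
which boundary points are connected by a link. -/
abbrev Bdry := Sum (Fin n) (Fin n)

/-- The generator diagram `E_{i+1}` (for `i : Fin (n-1)`): a cap joining bottom
points `i, i+1`, a cup joining top points `i, i+1`, and straight links
elsewhere. -/
def EDiag (i : Fin (n - 1)) (x y : Bdry n) : Prop :=
  let a : Fin n := ⟨(i : ℕ), lt_of_lt_of_le i.isLt (Nat.sub_le n 1)⟩
  let b : Fin n := ⟨(i : ℕ) + 1, by have := i.isLt; omega⟩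
  (x = Sum.inl a ∧ y = Sum.inl b) ∨ (x = Sum.inl b ∧ y = Sum.inl a) ∨
  (x = Sum.inr a ∧ y = Sum.inr b) ∨ (x = Sum.inr b ∧ y = Sum.inr a) ∨
  (∃ j : Fin n, j ≠ a ∧ j ≠ b ∧
    ((x = Sum.inl j ∧ y = Sum.inr j) ∨ (x = Sum.inr j ∧ y = Sum.inl j)))

/-- The identity diagram: straight links only. -/
def IdDiag (x y : Bdry n) : Prop :=
  ∃ j : Fin n, (x = Sum.inl j ∧ y = Sum.inr j) ∨ (x = Sum.inr j ∧ y = Sum.inl j)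

/-- Vertical stacking of two diagrams `D₁` (below) and `D₂` (above): two outer
boundary points are linked in the product iff they are connected by a chain of
links of `D₁` and `D₂` through the identified middle points. The three layers
(bottom, middle, top) are encoded in `Fin n ⊕ (Fin n ⊕ Fin n)`. -/
def comp (D₁ D₂ : Bdry n → Bdry n → Prop) (x y : Bdry n) : Prop :=
  let emb₁ : Bdry n → Sum (Fin n) (Bdry n) :=
    Sum.elim Sum.inl (fun k => Sum.inr (Sum.inl k))
  let emb₂ : Bdry n → Sum (Fin n) (Bdry n) :=
    Sum.elim (fun k => Sum.inr (Sum.inl k)) (fun k => Sum.inr (Sum.inr k))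
  let embOut : Bdry n → Sum (Fin n) (Bdry n) :=
    Sum.elim Sum.inl (fun k => Sum.inr (Sum.inr k))
  let step : Sum (Fin n) (Bdry n) → Sum (Fin n) (Bdry n) → Prop := fun p q =>
    (∃ a b, D₁ a b ∧ p = emb₁ a ∧ q = emb₁ b) ∨
    (∃ a b, D₂ a b ∧ p = emb₂ a ∧ q = emb₂ b)
  x ≠ y ∧ Relation.EqvGen step (embOut x) (embOut y)

/-- The diagram of a word in the generators `E_i`, multiplied by stacking. -/
def wordDiag : List (Fin (n - 1)) → Bdry n → Bdry n → Prop
  | [] => IdDiag n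
  | i :: l => comp n (EDiag n i) (wordDiag l)

/-- The word `(E_{i_1} ⋯ E_{j_1}) ⋯ (E_{i_r} ⋯ E_{j_r})` of a Jones normal
form, where each factor is the decreasing run from `I k` down to `J k`. -/
def jnfWord {r : ℕ} (I J : Fin r → Fin (n - 1)) : List (Fin (n - 1)) :=
  (List.ofFn fun k : Fin r =>
    (List.range ((I k : ℕ) - (J k : ℕ) + 1)).map fun t =>
      (⟨(I k : ℕ) - t, lt_of_le_of_lt (Nat.sub_le _ _) (I k).isLt⟩ : Fin (n - 1))).flatten


section Parts




variable {n : ℕ}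

def lo (n : ℕ) (i : Fin (n-1)) : Fin n := ⟨i, lt_of_lt_of_le i.isLt (Nat.sub_le n 1)⟩
def hi (n : ℕ) (i : Fin (n-1)) : Fin n := ⟨(i:ℕ)+1, by have := i.isLt; omega⟩

lemma lo_ne_hi (i : Fin (n-1)) : lo n i ≠ hi n i := by
  simp [lo, hi, Fin.ext_iff]

def cont (i : Fin (n-1)) (g : Bdry n → Bdry n) (z : Bdry n) : Bdry n :=
  if z = Sum.inl (lo n i) then g (Sum.inl (hi n i))
  else if z = Sum.inl (hi n i) then g (Sum.inl (lo n i)) else z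

def hcomp (i : Fin (n-1)) (g : Bdry n → Bdry n) : Bdry n → Bdry n
  | Sum.inl p =>
    if p = lo n i then Sum.inl (hi n i)
    else if p = hi n i then Sum.inl (lo n i)
    else cont i g (g (Sum.inl p))
  | Sum.inr m => cont i g (g (Sum.inr m))

section hg
variable {i : Fin (n-1)} {g : Bdry n → Bdry n}

lemma cont_of_ne {z : Bdry n} (h1 : z ≠ Sum.inl (lo n i)) (h2 : z ≠ Sum.inl (hi n i)) :
    cont i g z = z := by simp [cont, h1, h2]

lemma cont_lo : cont i g (Sum.inl (lo n i)) = g (Sum.inl (hi n i)) := by simp [cont]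

lemma cont_hi : cont i g (Sum.inl (hi n i)) = g (Sum.inl (lo n i)) := by
  simp [cont, (lo_ne_hi i).symm]

lemma hcomp_lo : hcomp i g (Sum.inl (lo n i)) = Sum.inl (hi n i) := by simp [hcomp]

lemma hcomp_hi : hcomp i g (Sum.inl (hi n i)) = Sum.inl (lo n i) := by
  simp [hcomp, lo_ne_hi i, (lo_ne_hi i).symm]

lemma hcomp_inl {p : Fin n} (h1 : p ≠ lo n i) (h2 : p ≠ hi n i) :
    hcomp i g (Sum.inl p) = cont i g (g (Sum.inl p)) := by simp [hcomp, h1, h2]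

lemma hcomp_inr (m : Fin n) : hcomp i g (Sum.inr m) = cont i g (g (Sum.inr m)) := rfl

lemma hcomp_eq_cont {w : Bdry n} (h1 : w ≠ Sum.inl (lo n i)) (h2 : w ≠ Sum.inl (hi n i)) :
    hcomp i g w = cont i g (g w) := by
  cases w with
  | inl q =>
    exact hcomp_inl (fun h => h1 (by rw [h])) (fun h => h2 (by rw [h]))
  | inr m => rfl

variable (hg : Function.Involutive g) (hf : ∀ x, g x ≠ x)

include hg hf in
lemma cont_g_ne {x : Bdry n} (hx1 : x ≠ Sum.inl (lo n i)) (hx2 : x ≠ Sum.inl (hi n i)) :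
    cont i g (g x) ≠ x := by
  by_cases hz1 : g x = Sum.inl (lo n i)
  · rw [hz1, cont_lo]
    intro heq
    have : g x = Sum.inl (hi n i) := by rw [← heq, hg]
    rw [hz1] at this
    exact lo_ne_hi i (Sum.inl.inj this)
  by_cases hz2 : g x = Sum.inl (hi n i)
  · rw [hz2, cont_hi]
    intro heq
    have : g x = Sum.inl (lo n i) := by rw [← heq, hg]
    rw [hz2] at this
    exact lo_ne_hi i (Sum.inl.inj this).symm
  · rw [cont_of_ne hz1 hz2]; exact hf x

include hg hf in
lemma hcomp_fpf : ∀ x, hcomp i g x ≠ x := by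
  intro x
  by_cases h1 : x = Sum.inl (lo n i)
  · subst h1; rw [hcomp_lo]; intro h; exact (lo_ne_hi i).symm (Sum.inl.inj h)
  by_cases h2 : x = Sum.inl (hi n i)
  · subst h2; rw [hcomp_hi]; intro h; exact (lo_ne_hi i) (Sum.inl.inj h)
  · rw [hcomp_eq_cont h1 h2]; exact cont_g_ne hg hf h1 h2

include hg hf in
lemma hcomp_cont {x : Bdry n} (hx1 : x ≠ Sum.inl (lo n i)) (hx2 : x ≠ Sum.inl (hi n i)) :
    hcomp i g (cont i g (g x)) = x := by
  have hxg : g (g x) = x := hg x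
  by_cases hz1 : g x = Sum.inl (lo n i)
  · rw [hz1, cont_lo]
    set w := g (Sum.inl (hi n i)) with hw
    have hw1 : w ≠ Sum.inl (lo n i) := by
      intro h
      have : g (Sum.inl (lo n i)) = Sum.inl (hi n i) := by rw [← h, hg]
      rw [← hz1, hxg] at this
      exact hx2 this
    have hw2 : w ≠ Sum.inl (hi n i) := by rw [hw]; exact hf _
    rw [hcomp_eq_cont hw1 hw2, hw, hg, cont_hi, ← hz1, hxg]
  by_cases hz2 : g x = Sum.inl (hi n i)
  · rw [hz2, cont_hi]
    set w := g (Sum.inl (lo n i)) with hw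
    have hw2 : w ≠ Sum.inl (hi n i) := by
      intro h
      have : g (Sum.inl (hi n i)) = Sum.inl (lo n i) := by rw [← h, hg]
      rw [← hz2, hxg] at this
      exact hx1 this
    have hw1 : w ≠ Sum.inl (lo n i) := by rw [hw]; exact hf _
    rw [hcomp_eq_cont hw1 hw2, hw, hg, cont_lo, ← hz2, hxg]
  · rw [cont_of_ne hz1 hz2, hcomp_eq_cont hz1 hz2, hxg, cont_of_ne hx1 hx2]

include hg hf in
lemma hcomp_invol : Function.Involutive (hcomp i g) := by
  intro x
  by_cases h1 : x = Sum.inl (lo n i)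
  · subst h1; rw [hcomp_lo, hcomp_hi]
  by_cases h2 : x = Sum.inl (hi n i)
  · subst h2; rw [hcomp_hi, hcomp_lo]
  · rw [hcomp_eq_cont h1 h2, hcomp_cont hg hf h1 h2]

end hg




variable {n : ℕ}

def emb1 : Bdry n → Sum (Fin n) (Bdry n) := Sum.elim Sum.inl (fun k => Sum.inr (Sum.inl k))
def emb2 : Bdry n → Sum (Fin n) (Bdry n) :=
  Sum.elim (fun k => Sum.inr (Sum.inl k)) (fun k => Sum.inr (Sum.inr k))
def embO : Bdry n → Sum (Fin n) (Bdry n) := Sum.elim Sum.inl (fun k => Sum.inr (Sum.inr k))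

def Step (D₁ D₂ : Bdry n → Bdry n → Prop) : Sum (Fin n) (Bdry n) → Sum (Fin n) (Bdry n) → Prop :=
  fun p q =>
    (∃ a b, D₁ a b ∧ p = emb1 a ∧ q = emb1 b) ∨
    (∃ a b, D₂ a b ∧ p = emb2 a ∧ q = emb2 b)

lemma comp_iff (D₁ D₂ : Bdry n → Bdry n → Prop) (x y : Bdry n) :
    comp n D₁ D₂ x y ↔ x ≠ y ∧ Relation.EqvGen (Step D₁ D₂) (embO x) (embO y) :=
  Iff.rfl

def key : Bdry n → ℕ := Sum.elim Fin.val (fun j => n + (j : ℕ))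

lemma key_inj : Function.Injective (key (n := n)) := by
  rintro (p | p) (q | q) h <;> simp [key] at h <;>
    first
      | (exact congrArg Sum.inl (Fin.ext h))
      | (exact congrArg Sum.inr (Fin.ext h))
      | (exact absurd h (by have := p.isLt; have := q.isLt; omega))
      | (exact absurd h (by have := p.isLt; have := q.isLt; omega))

section canonical

variable (i : Fin (n-1)) (g : Bdry n → Bdry n)

def canon (x : Bdry n) : Bdry n :=
  if key x ≤ key (hcomp i g x) then x else hcomp i g x

variable {i g}
variable (hg : Function.Involutive g) (hf : ∀ x, g x ≠ x)

include hg hf in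
lemma canon_hcomp (x : Bdry n) : canon i g (hcomp i g x) = canon i g x := by
  have hinv := hcomp_invol hg hf (i := i)
  unfold canon
  rw [hinv x]
  rcases le_or_gt (key x) (key (hcomp i g x)) with h | h
  · rcases eq_or_lt_of_le h with h' | h'
    · have : x = hcomp i g x := key_inj h'
      simp [← this]
    · rw [if_pos h, if_neg (not_le_of_gt h')]
  · rw [if_neg (not_le_of_gt h), if_pos (le_of_lt h)]

include hg hf in
lemma canon_rel {x y : Bdry n} (hxy : hcomp i g x = y) : canon i g x = canon i g y := by
  rw [← hxy, canon_hcomp hg hf]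

include hg hf in
lemma canon_elim {x y : Bdry n} (h : canon i g x = canon i g y) :
    x = y ∨ hcomp i g x = y := by
  have hinv := hcomp_invol hg hf (i := i)
  unfold canon at h
  split_ifs at h
  · exact Or.inl h
  · exact Or.inr (by rw [h, hinv])
  · exact Or.inr h
  · left; have := congrArg (hcomp i g) h; rwa [hinv, hinv] at this

variable (i g) in
def theta : Sum (Fin n) (Bdry n) → Option (Bdry n)
  | Sum.inl k => some (canon i g (Sum.inl k))
  | Sum.inr (Sum.inr m) => some (canon i g (Sum.inr m))
  | Sum.inr (Sum.inl m) =>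
    if m = lo n i then
      (if g (Sum.inl (lo n i)) = Sum.inl (hi n i) then none
       else some (canon i g (g (Sum.inl (lo n i)))))
    else if m = hi n i then
      (if g (Sum.inl (hi n i)) = Sum.inl (lo n i) then none
       else some (canon i g (g (Sum.inl (hi n i)))))
    else some (canon i g (Sum.inl m))

lemma theta_out (x : Bdry n) : theta i g (embO x) = some (canon i g x) := by
  cases x <;> rfl

include hg hf in
lemma theta_E {u v : Bdry n} (hE : EDiag n i u v) :
    theta i g (emb1 u) = theta i g (emb1 v) := by
  have hlo := hcomp_lo (i := i) (g := g)
  have hhi := hcomp_hi (i := i) (g := g)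
  rcases hE with ⟨hu, hv⟩ | ⟨hu, hv⟩ | ⟨hu, hv⟩ | ⟨hu, hv⟩ | ⟨j, hj1, hj2, ⟨hu, hv⟩ | ⟨hu, hv⟩⟩
  · subst hu; subst hv
    show some (canon i g (Sum.inl (lo n i))) = some (canon i g (Sum.inl (hi n i)))
    exact congrArg some (canon_rel hg hf hlo)
  · subst hu; subst hv
    show some (canon i g (Sum.inl (hi n i))) = some (canon i g (Sum.inl (lo n i)))
    exact congrArg some (canon_rel hg hf hhi)
  · -- cup: middle lo ~ middle hi
    subst hu; subst hv
    show theta i g (Sum.inr (Sum.inl (lo n i))) = theta i g (Sum.inr (Sum.inl (hi n i)))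
    simp only [theta, if_pos rfl, if_neg (lo_ne_hi i), if_neg (lo_ne_hi i).symm, if_true, eq_self_iff_true]
    by_cases hloop : g (Sum.inl (lo n i)) = Sum.inl (hi n i)
    · have h2 : g (Sum.inl (hi n i)) = Sum.inl (lo n i) := by rw [← hloop, hg]
      rw [if_pos hloop, if_pos h2]
    · have h2 : ¬ g (Sum.inl (hi n i)) = Sum.inl (lo n i) := by
        intro h2; exact hloop (by rw [← h2, hg])
      rw [if_neg hloop, if_neg h2]
      refine congrArg some (canon_rel hg hf ?_)
      have h3 : g (Sum.inl (lo n i)) ≠ Sum.inl (lo n i) := hf _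
      rw [hcomp_eq_cont h3 hloop, hg, cont_lo]
  · subst hu; subst hv
    show theta i g (Sum.inr (Sum.inl (hi n i))) = theta i g (Sum.inr (Sum.inl (lo n i)))
    simp only [theta, if_pos rfl, if_neg (lo_ne_hi i), if_neg (lo_ne_hi i).symm, if_true, eq_self_iff_true]
    by_cases hloop : g (Sum.inl (hi n i)) = Sum.inl (lo n i)
    · have h2 : g (Sum.inl (lo n i)) = Sum.inl (hi n i) := by rw [← hloop, hg]
      rw [if_pos hloop, if_pos h2]
    · have h2 : ¬ g (Sum.inl (lo n i)) = Sum.inl (hi n i) := by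
        intro h2; exact hloop (by rw [← h2, hg])
      rw [if_neg hloop, if_neg h2]
      refine congrArg some (canon_rel hg hf ?_)
      have h3 : g (Sum.inl (hi n i)) ≠ Sum.inl (hi n i) := hf _
      rw [hcomp_eq_cont hloop h3, hg, cont_hi]
  · subst hu; subst hv
    have hj1' : j ≠ lo n i := hj1
    have hj2' : j ≠ hi n i := hj2
    show some (canon i g (Sum.inl j)) = theta i g (Sum.inr (Sum.inl j))
    simp only [theta, if_neg hj1', if_neg hj2']
  · subst hu; subst hv
    have hj1' : j ≠ lo n i := hj1
    have hj2' : j ≠ hi n i := hj2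
    show theta i g (Sum.inr (Sum.inl j)) = some (canon i g (Sum.inl j))
    simp only [theta, if_neg hj1', if_neg hj2']

lemma theta_mid_lo :
    theta i g (emb2 (Sum.inl (lo n i))) =
      (if g (Sum.inl (lo n i)) = Sum.inl (hi n i) then none
       else some (canon i g (g (Sum.inl (lo n i))))) := by
  show theta i g (Sum.inr (Sum.inl (lo n i))) = _
  simp only [theta, if_pos rfl, if_true, eq_self_iff_true]

lemma theta_mid_hi :
    theta i g (emb2 (Sum.inl (hi n i))) =
      (if g (Sum.inl (hi n i)) = Sum.inl (lo n i) then none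
       else some (canon i g (g (Sum.inl (hi n i))))) := by
  show theta i g (Sum.inr (Sum.inl (hi n i))) = _
  simp only [theta, if_neg (lo_ne_hi i).symm, if_pos rfl, if_true, eq_self_iff_true]

lemma theta_mid_out {u : Bdry n} (h1 : u ≠ Sum.inl (lo n i)) (h2 : u ≠ Sum.inl (hi n i)) :
    theta i g (emb2 u) = some (canon i g u) := by
  cases u with
  | inl m =>
    show theta i g (Sum.inr (Sum.inl m)) = _
    have hm1 : m ≠ lo n i := fun h => h1 (by rw [h])
    have hm2 : m ≠ hi n i := fun h => h2 (by rw [h])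
    simp only [theta, if_neg hm1, if_neg hm2]
  | inr m => rfl

include hg hf in
lemma theta_G {u : Bdry n} :
    theta i g (emb2 u) = theta i g (emb2 (g u)) := by
  by_cases h1 : u = Sum.inl (lo n i)
  · subst h1
    by_cases hv : g (Sum.inl (lo n i)) = Sum.inl (hi n i)
    · rw [theta_mid_lo, if_pos hv, hv, theta_mid_hi,
        if_pos (by rw [← hv, hg])]
    · rw [theta_mid_lo, if_neg hv,
        theta_mid_out (fun h => hf _ h) hv]
  by_cases h2 : u = Sum.inl (hi n i)
  · subst h2
    by_cases hv : g (Sum.inl (hi n i)) = Sum.inl (lo n i)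
    · rw [theta_mid_hi, if_pos hv, hv, theta_mid_lo,
        if_pos (by rw [← hv, hg])]
    · rw [theta_mid_hi, if_neg hv,
        theta_mid_out hv (fun h => hf _ h)]
  · rw [theta_mid_out h1 h2]
    by_cases hv1 : g u = Sum.inl (lo n i)
    · rw [hv1, theta_mid_lo, if_neg (by rw [← hv1, hg]; exact h2), ← hv1, hg]
    by_cases hv2 : g u = Sum.inl (hi n i)
    · rw [hv2, theta_mid_hi, if_neg (by rw [← hv2, hg]; exact h1), ← hv2, hg]
    · rw [theta_mid_out hv1 hv2]
      refine congrArg some (canon_rel hg hf ?_)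
      rw [hcomp_eq_cont h1 h2, cont_of_ne hv1 hv2]

end canonical



variable {n : ℕ}

section compE
variable {i : Fin (n-1)} {g : Bdry n → Bdry n} {R : Bdry n → Bdry n → Prop}
variable (hg : Function.Involutive g) (hf : ∀ x, g x ≠ x)
variable (hR : ∀ u v, R u v ↔ u ≠ v ∧ g u = v)

include hg hf hR in
lemma theta_step {p q : Sum (Fin n) (Bdry n)} (h : Step (EDiag n i) R p q) :
    theta i g p = theta i g q := by
  rcases h with ⟨u, v, hE, hp, hq⟩ | ⟨u, v, hRuv, hp, hq⟩
  · subst hp; subst hq; exact theta_E hg hf hE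
  · subst hp; subst hq
    obtain ⟨hne, hguv⟩ := (hR u v).1 hRuv
    rw [← hguv]
    exact theta_G hg hf

include hg hf hR in
lemma theta_eqv {p q : Sum (Fin n) (Bdry n)}
    (h : Relation.EqvGen (Step (EDiag n i) R) p q) : theta i g p = theta i g q := by
  induction h with
  | rel _ _ h => exact theta_step hg hf hR h
  | refl => rfl
  | symm _ _ _ ih => exact ih.symm
  | trans _ _ _ _ _ ih1 ih2 => exact ih1.trans ih2

-- chain construction helpers
lemma step_cap : Step (EDiag n i) R (embO (Sum.inl (lo n i))) (embO (Sum.inl (hi n i))) :=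
  Or.inl ⟨Sum.inl (lo n i), Sum.inl (hi n i), Or.inl ⟨rfl, rfl⟩, rfl, rfl⟩

lemma step_cup : Step (EDiag n i) R (emb2 (Sum.inl (lo n i))) (emb2 (Sum.inl (hi n i))) :=
  Or.inl ⟨Sum.inr (lo n i), Sum.inr (hi n i), Or.inr (Or.inr (Or.inl ⟨rfl, rfl⟩)), rfl, rfl⟩

lemma step_str {j : Fin n} (hj1 : j ≠ lo n i) (hj2 : j ≠ hi n i) :
    Step (EDiag n i) R (embO (Sum.inl j)) (emb2 (Sum.inl j)) :=
  Or.inl ⟨Sum.inl j, Sum.inr j,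
    Or.inr (Or.inr (Or.inr (Or.inr ⟨j, hj1, hj2, Or.inl ⟨rfl, rfl⟩⟩))), rfl, rfl⟩

include hR hf in
lemma step_g (u : Bdry n) : Step (EDiag n i) R (emb2 u) (emb2 (g u)) :=
  Or.inr ⟨u, g u, (hR u (g u)).2 ⟨fun h => hf u h.symm, rfl⟩, rfl, rfl⟩

lemma exit_mid {w : Bdry n} (h1 : w ≠ Sum.inl (lo n i)) (h2 : w ≠ Sum.inl (hi n i)) :
    Relation.EqvGen (Step (EDiag n i) R) (emb2 w) (embO w) := by
  cases w with
  | inl k =>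
    exact Relation.EqvGen.symm _ _ (Relation.EqvGen.rel _ _
      (step_str (fun h => h1 (by rw [h])) (fun h => h2 (by rw [h]))))
  | inr m => exact Relation.EqvGen.refl _

include hg hf hR in
lemma reach (z : Bdry n) (hz1 : g z ≠ Sum.inl (lo n i)) (hz2 : g z ≠ Sum.inl (hi n i)) :
    Relation.EqvGen (Step (EDiag n i) R) (emb2 z) (embO (cont i g z)) := by
  by_cases h1 : z = Sum.inl (lo n i)
  · subst h1
    rw [cont_lo]
    refine Relation.EqvGen.trans _ _ _ (Relation.EqvGen.rel _ _ step_cup) ?_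
    refine Relation.EqvGen.trans _ _ _ (Relation.EqvGen.rel _ _ (step_g hf hR _)) ?_
    refine exit_mid ?_ (hf _)
    intro h
    exact hz2 (by rw [← h, hg])
  by_cases h2 : z = Sum.inl (hi n i)
  · subst h2
    rw [cont_hi]
    refine Relation.EqvGen.trans _ _ _
      (Relation.EqvGen.symm _ _ (Relation.EqvGen.rel _ _ step_cup)) ?_
    refine Relation.EqvGen.trans _ _ _ (Relation.EqvGen.rel _ _ (step_g hf hR _)) ?_
    refine exit_mid (hf _) ?_
    intro h
    exact hz1 (by rw [← h, hg])
  · rw [cont_of_ne h1 h2]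
    exact exit_mid h1 h2

include hg hf hR in
lemma comp_E (x y : Bdry n) :
    comp n (EDiag n i) R x y ↔ (x ≠ y ∧ hcomp i g x = y) := by
  rw [comp_iff]
  constructor
  · rintro ⟨hxy, hch⟩
    refine ⟨hxy, ?_⟩
    have := theta_eqv hg hf hR hch
    rw [theta_out, theta_out] at this
    rcases canon_elim hg hf (Option.some.inj this) with h | h
    · exact absurd h hxy
    · exact h
  · rintro ⟨hxy, hcx⟩
    refine ⟨hxy, ?_⟩
    rw [← hcx]
    by_cases h1 : x = Sum.inl (lo n i)
    · subst h1; rw [hcomp_lo]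
      exact Relation.EqvGen.rel _ _ step_cap
    by_cases h2 : x = Sum.inl (hi n i)
    · subst h2; rw [hcomp_hi]
      exact Relation.EqvGen.symm _ _ (Relation.EqvGen.rel _ _ step_cap)
    · rw [hcomp_eq_cont h1 h2]
      have hz1 : g (g x) ≠ Sum.inl (lo n i) := by rw [hg]; exact h1
      have hz2 : g (g x) ≠ Sum.inl (hi n i) := by rw [hg]; exact h2
      have tail := reach hg hf hR (g x) hz1 hz2
      cases x with
      | inl p =>
        refine Relation.EqvGen.trans _ _ _ ?_ tail
        refine Relation.EqvGen.trans _ _ _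
          (Relation.EqvGen.rel _ _ (step_str (fun h => h1 (by rw [h]))
            (fun h => h2 (by rw [h])))) ?_
        exact Relation.EqvGen.rel _ _ (step_g hf hR _)
      | inr m =>
        refine Relation.EqvGen.trans _ _ _ ?_ tail
        exact Relation.EqvGen.rel _ _ (step_g hf hR (Sum.inr m))

end compE

def matchOf : List (Fin (n-1)) → Bdry n → Bdry n
  | [] => Sum.swap
  | i :: l => hcomp i (matchOf l)

lemma swap_invol : Function.Involutive (Sum.swap : Bdry n → Bdry n) := fun x => Sum.swap_swap x

lemma swap_fpf : ∀ x : Bdry n, Sum.swap x ≠ x := by rintro (p | p) h <;> simp [Sum.swap] at h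

lemma matchOf_good (l : List (Fin (n-1))) :
    Function.Involutive (matchOf (n := n) l) ∧ ∀ x, matchOf (n := n) l x ≠ x := by
  induction l with
  | nil => exact ⟨swap_invol, swap_fpf⟩
  | cons i l ih => exact ⟨hcomp_invol ih.1 ih.2, hcomp_fpf ih.1 ih.2⟩

lemma matchOf_invol (l : List (Fin (n-1))) : Function.Involutive (matchOf (n := n) l) :=
  (matchOf_good l).1

lemma matchOf_fpf (l : List (Fin (n-1))) : ∀ x, matchOf (n := n) l x ≠ x :=
  (matchOf_good l).2

lemma IdDiag_iff (x y : Bdry n) : IdDiag n x y ↔ x ≠ y ∧ Sum.swap x = y := by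
  constructor
  · rintro ⟨j, ⟨hx, hy⟩ | ⟨hx, hy⟩⟩ <;> subst hx <;> subst hy <;>
      exact ⟨by simp, rfl⟩
  · rintro ⟨hxy, hs⟩
    cases x with
    | inl p => exact ⟨p, Or.inl ⟨rfl, hs.symm⟩⟩
    | inr p => exact ⟨p, Or.inr ⟨rfl, hs.symm⟩⟩

lemma wordDiag_iff (l : List (Fin (n-1))) (x y : Bdry n) :
    wordDiag n l x y ↔ x ≠ y ∧ matchOf l x = y := by
  induction l generalizing x y with
  | nil => exact IdDiag_iff x y
  | cons i l ih =>
    show comp n (EDiag n i) (wordDiag n l) x y ↔ _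
    exact comp_E (matchOf_invol l) (matchOf_fpf l) ih x y




variable {n : ℕ}

def ipred (i : Fin (n-1)) : Fin (n-1) :=
  ⟨(i:ℕ) - 1, lt_of_le_of_lt (Nat.sub_le _ _) i.isLt⟩

def runWord (p : Fin (n-1) × Fin (n-1)) : List (Fin (n-1)) :=
  (List.range ((p.1 : ℕ) - (p.2 : ℕ) + 1)).map fun t =>
    (⟨(p.1 : ℕ) - t, lt_of_le_of_lt (Nat.sub_le _ _) p.1.isLt⟩ : Fin (n-1))

def wordOf (L : List (Fin (n-1) × Fin (n-1))) : List (Fin (n-1)) :=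
  (L.map runWord).flatten

inductive Good : List (Fin (n-1) × Fin (n-1)) → Prop
  | nil : Good []
  | cons {i j : Fin (n-1)} {L : List (Fin (n-1) × Fin (n-1))} :
      (j : ℕ) ≤ (i : ℕ) →
      (∀ p ∈ L, (i : ℕ) < (p.1 : ℕ) ∧ (j : ℕ) < (p.2 : ℕ)) →
      Good L → Good ((i, j) :: L)

lemma jnfWord_eq {r : ℕ} (I J : Fin r → Fin (n-1)) :
    jnfWord n I J = wordOf (List.ofFn fun k => (I k, J k)) := by
  unfold jnfWord wordOf
  rw [List.map_ofFn]
  rfl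

lemma ipred_val (i : Fin (n-1)) : ((ipred i : Fin (n-1)):ℕ) = (i:ℕ) - 1 := rfl

lemma runWord_single {i j : Fin (n-1)} (h : (j:ℕ) = (i:ℕ)) : runWord (i, j) = [i] := by
  apply List.ext_getElem
  · simp only [runWord, List.length_map, List.length_range, List.length_cons,
      List.length_nil]
    have e1 : (((i, j).1 : Fin (n-1)):ℕ) = (i:ℕ) := rfl
    have e2 : (((i, j).2 : Fin (n-1)):ℕ) = (j:ℕ) := rfl
    omega
  · intro k h1 h2
    have hk0 : k = 0 := by
      have h3 := h2
      simp only [List.length_cons, List.length_nil] at h3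
      omega
    subst hk0
    simp only [runWord, List.getElem_map, List.getElem_range, List.getElem_cons_zero]
    exact Fin.ext (by simp)

lemma runWord_cons {i j : Fin (n-1)} (h : (j:ℕ) < (i:ℕ)) :
    runWord (i, j) = i :: runWord (ipred i, j) := by
  have hip := ipred_val i
  apply List.ext_getElem
  · simp only [runWord, List.length_map, List.length_range, List.length_cons]
    omega
  · intro k h1 h2
    match k with
    | 0 =>
      simp only [runWord, List.getElem_map, List.getElem_range, List.getElem_cons_zero]
      exact Fin.ext (by simp)
    | (k+1) =>
      simp only [runWord, List.getElem_map, List.getElem_range, List.getElem_cons_succ]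
      exact Fin.ext (by show (i:ℕ) - (k+1) = ((ipred i : Fin (n-1)):ℕ) - k; omega)

lemma wordOf_cons (i j : Fin (n-1)) (L₂ : List (Fin (n-1) × Fin (n-1))) :
    wordOf ((i, j) :: L₂) = runWord (i, j) ++ wordOf L₂ := by
  unfold wordOf
  rw [List.map_cons, List.flatten_cons]

lemma peel_eq {i j : Fin (n-1)} {L₂ : List (Fin (n-1) × Fin (n-1))} (h : (j:ℕ) = (i:ℕ)) :
    wordOf ((i, j) :: L₂) = i :: wordOf L₂ := by
  rw [wordOf_cons, runWord_single h]; rfl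

lemma peel_lt {i j : Fin (n-1)} {L₂ : List (Fin (n-1) × Fin (n-1))} (h : (j:ℕ) < (i:ℕ)) :
    wordOf ((i, j) :: L₂) = i :: wordOf ((ipred i, j) :: L₂) := by
  rw [wordOf_cons, runWord_cons h, wordOf_cons]; rfl

lemma good_ipred {i j : Fin (n-1)} {L₂ : List (Fin (n-1) × Fin (n-1))}
    (hG : Good ((i, j) :: L₂)) (h : (j:ℕ) < (i:ℕ)) : Good ((ipred i, j) :: L₂) := by
  cases hG with
  | cons hji hmem hG₂ =>
    refine Good.cons (by show (j:ℕ) ≤ (i:ℕ) - 1; omega) (fun p hp => ?_) hG₂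
    obtain ⟨h1, h2⟩ := hmem p hp
    exact ⟨by show ((i:ℕ)-1) < _; omega, h2⟩

/-- Common peeling structure used in the induction proofs. -/
lemma peelStruct {i j : Fin (n-1)} {L₂ : List (Fin (n-1) × Fin (n-1))}
    (hG : Good ((i, j) :: L₂)) :
    ∃ L' : List (Fin (n-1) × Fin (n-1)),
      wordOf ((i, j) :: L₂) = i :: wordOf L' ∧ Good L' ∧
      (∀ q : ℕ, q ≠ (i:ℕ) → (∃ pr ∈ L', q = (pr.1:ℕ) + 1) →
        ∃ pr ∈ ((i, j) :: L₂), q = (pr.1:ℕ) + 1) ∧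
      (∀ pr ∈ L', (pr.1:ℕ) ≠ (i:ℕ)) ∧
      (∀ pr ∈ L', (j:ℕ) ≤ (pr.2:ℕ)) := by
  obtain ⟨hji, hmem, hG₂⟩ :
      ((j:ℕ) ≤ (i:ℕ)) ∧ (∀ p ∈ L₂, (i:ℕ) < (p.1:ℕ) ∧ (j:ℕ) < (p.2:ℕ)) ∧ Good L₂ := by
    cases hG with | cons hji hmem hG₂ => exact ⟨hji, hmem, hG₂⟩
  rcases eq_or_lt_of_le hji with hc | hc
  · refine ⟨L₂, peel_eq hc, hG₂, ?_, ?_, ?_⟩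
    · rintro q hq ⟨pr, hpr, hq2⟩
      exact ⟨pr, List.mem_cons_of_mem _ hpr, hq2⟩
    · exact fun pr hpr => ((hmem pr hpr).1).ne'
    · exact fun pr hpr => le_of_lt (hmem pr hpr).2
  · refine ⟨(ipred i, j) :: L₂, peel_lt hc, good_ipred hG hc, ?_, ?_, ?_⟩
    · rintro q hq ⟨pr, hpr, hq2⟩
      rcases List.mem_cons.1 hpr with h | h
      · subst h
        exact absurd hq2 (by show q ≠ (i:ℕ)-1+1; omega)
      · exact ⟨pr, List.mem_cons_of_mem _ h, hq2⟩
    · intro pr hpr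
      rcases List.mem_cons.1 hpr with h | h
      · subst h; show (i:ℕ) - 1 ≠ (i:ℕ); omega
      · exact ((hmem pr h).1).ne'
    · intro pr hpr
      rcases List.mem_cons.1 hpr with h | h
      · subst h; exact le_refl _
      · exact le_of_lt (hmem pr h).2

lemma wordOf_eq_nil {L : List (Fin (n-1) × Fin (n-1))} (h : wordOf L = []) : L = [] := by
  rcases L with _ | ⟨⟨i, j⟩, L₂⟩
  · rfl
  · exfalso
    rw [wordOf_cons] at h
    have h2 := congrArg List.length h
    simp only [List.length_append, List.length_nil, runWord, List.length_map,
      List.length_range] at h2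
    omega

lemma matchOf_cons (i : Fin (n-1)) (l : List (Fin (n-1))) :
    matchOf (i :: l) = hcomp i (matchOf l) := rfl

/-- (D1) points strictly below all the `j`s go straight across. -/
lemma lemD1 : ∀ (N : ℕ) (L : List (Fin (n-1) × Fin (n-1))), (wordOf L).length ≤ N → Good L →
    ∀ p : Fin n, (∀ pr ∈ L, (p:ℕ) < (pr.2:ℕ)) →
      matchOf (wordOf L) (Sum.inl p) = Sum.inr p := by
  intro N
  induction N with
  | zero =>
    intro L hlen hG p hp
    rw [List.length_eq_zero_iff.1 (Nat.le_zero.1 hlen)]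
    rfl
  | succ N ih =>
    intro L hlen hG p hp
    rcases L with _ | ⟨⟨i, j⟩, L₂⟩
    · rfl
    ·
      obtain ⟨L', hword, hG', _, _, hsnd⟩ := peelStruct hG
      have hpj : (p:ℕ) < (j:ℕ) := hp (i, j) (List.mem_cons_self)
      have hji : (j:ℕ) ≤ (i:ℕ) := by cases hG with | cons hji _ _ => exact hji
      have hlen' : (wordOf L').length ≤ N := by
        rw [hword] at hlen
        simpa using hlen
      have hp' : ∀ pr ∈ L', (p:ℕ) < (pr.2:ℕ) :=
        fun pr hpr => lt_of_lt_of_le hpj (hsnd pr hpr)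
      have hrec := ih L' hlen' hG' p hp'
      rw [hword, matchOf_cons]
      have hp1 : p ≠ lo n i := by
        intro h; rw [h] at hpj
        have : (i:ℕ) < (j:ℕ) := hpj
        omega
      have hp2 : p ≠ hi n i := by
        intro h; rw [h] at hpj
        have : (i:ℕ) + 1 < (j:ℕ) := hpj
        omega
      rw [hcomp_inl hp1 hp2, hrec, cont_of_ne (by simp) (by simp)]

/-- (P2') bottom caps have right endpoints of the form `i_k + 1`. -/
lemma lemP2 : ∀ (N : ℕ) (L : List (Fin (n-1) × Fin (n-1))), (wordOf L).length ≤ N → Good L →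
    ∀ p q : Fin n, matchOf (wordOf L) (Sum.inl p) = Sum.inl q → (p:ℕ) < (q:ℕ) →
      ∃ pr ∈ L, (q:ℕ) = (pr.1:ℕ) + 1 := by
  intro N
  induction N with
  | zero =>
    intro L hlen hG p q hm hpq
    rw [List.length_eq_zero_iff.1 (Nat.le_zero.1 hlen)] at hm
    exact absurd hm (by simp [matchOf, Sum.swap])
  | succ N ih =>
    intro L hlen hG p q hm hpq
    rcases L with _ | ⟨⟨i, j⟩, L₂⟩
    · exact absurd hm (by show ¬ (Sum.inr p : Bdry n) = Sum.inl q; simp)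
    · obtain ⟨L', hword, hG', hfrom, hnofst, _⟩ := peelStruct hG
      have hlen' : (wordOf L').length ≤ N := by
        rw [hword] at hlen; simpa using hlen
      rw [hword, matchOf_cons] at hm
      set g := matchOf (wordOf L') with hgdef
      have hg : Function.Involutive g := matchOf_invol (wordOf L')
      have hf : ∀ x, g x ≠ x := matchOf_fpf (wordOf L')
      by_cases hp1 : p = lo n i
      · rw [hp1, hcomp_lo] at hm
        refine ⟨(i, j), List.mem_cons_self, ?_⟩
        have : q = hi n i := (Sum.inl.inj hm).symm
        rw [this]; rfl
      by_cases hp2 : p = hi n i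
      · rw [hp2, hcomp_hi] at hm
        have : q = lo n i := (Sum.inl.inj hm).symm
        rw [hp2, this] at hpq
        have hpq' : (i:ℕ) + 1 < (i:ℕ) := hpq
        omega
      rw [hcomp_inl hp1 hp2] at hm
      by_cases hz1 : g (Sum.inl p) = Sum.inl (lo n i)
      · rw [hz1, cont_lo] at hm
        -- g (inl hi) = inl q
        rcases lt_trichotomy ((q:ℕ)) ((i:ℕ)+1) with hlt' | heq' | hgt'
        · -- impossible: g (inl q) = inl hi with q < i+1 gives head-first-index i
          have hq' : g (Sum.inl q) = Sum.inl (hi n i) := by rw [← hm, hg]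
          have hlt'' : (q:ℕ) < ((hi n i : Fin n):ℕ) := hlt'
          obtain ⟨pr, hpr, hpr2⟩ := ih L' hlen' hG' q (hi n i) hq' hlt''
          have hpr2' : (i:ℕ) + 1 = (pr.1:ℕ) + 1 := hpr2
          exact absurd hpr2' (fun h => hnofst pr hpr (by omega))
        · have : q = hi n i := Fin.ext heq'
          rw [this] at hm
          exact absurd hm (hf _)
        · have hgt'' : ((hi n i : Fin n):ℕ) < (q:ℕ) := hgt'
          obtain ⟨pr, hpr, hpr2⟩ := ih L' hlen' hG' (hi n i) q hm hgt''
          exact hfrom (q:ℕ) (by omega) ⟨pr, hpr, hpr2⟩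
      by_cases hz2 : g (Sum.inl p) = Sum.inl (hi n i)
      · rw [hz2, cont_hi] at hm
        -- g (inl lo) = inl q
        rcases lt_trichotomy ((q:ℕ)) ((i:ℕ)) with hlt' | heq' | hgt'
        · -- then analyze p vs hi
          rcases lt_trichotomy ((p:ℕ)) ((i:ℕ)+1) with hplt | hpeq | hpgt
          · have hplt' : (p:ℕ) < ((hi n i : Fin n):ℕ) := hplt
            obtain ⟨pr, hpr, hpr2⟩ := ih L' hlen' hG' p (hi n i) hz2 hplt'
            have hpr2' : (i:ℕ) + 1 = (pr.1:ℕ) + 1 := hpr2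
            exact absurd hpr2' (fun h => hnofst pr hpr (by omega))
          · exact absurd (Fin.ext hpeq) hp2
          · omega
        · have : q = lo n i := Fin.ext heq'
          rw [this] at hm
          exact absurd hm (hf _)
        · have hgt'' : ((lo n i : Fin n):ℕ) < (q:ℕ) := hgt'
          obtain ⟨pr, hpr, hpr2⟩ := ih L' hlen' hG' (lo n i) q hm hgt''
          exact hfrom (q:ℕ) (by omega) ⟨pr, hpr, hpr2⟩
      · rw [cont_of_ne hz1 hz2] at hm
        have hqi : (q:ℕ) ≠ (i:ℕ) := by
          intro h
          exact hz1 (by rw [hm]; exact congrArg Sum.inl (Fin.ext h))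
        obtain ⟨pr, hpr, hpr2⟩ := ih L' hlen' hG' p q hm hpq
        exact hfrom (q:ℕ) hqi ⟨pr, hpr, hpr2⟩




variable {n : ℕ}

/-- (D5) a bottom-to-top strand descending to the left starts at a point `i_k + 1`. -/
lemma lemD5 : ∀ (N : ℕ) (L : List (Fin (n-1) × Fin (n-1))), (wordOf L).length ≤ N → Good L →
    ∀ p q : Fin n, matchOf (wordOf L) (Sum.inl p) = Sum.inr q → (q:ℕ) < (p:ℕ) →
      ∃ pr ∈ L, (p:ℕ) = (pr.1:ℕ) + 1 := by
  intro N
  induction N with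
  | zero =>
    intro L hlen hG p q hm hqp
    rw [List.length_eq_zero_iff.1 (Nat.le_zero.1 hlen)] at hm
    have hm' : (Sum.inr p : Bdry n) = Sum.inr q := hm
    have hpq : p = q := Sum.inr.inj hm'
    have := congrArg Fin.val hpq
    omega
  | succ N ih =>
    intro L hlen hG p q hm hqp
    rcases L with _ | ⟨⟨i, j⟩, L₂⟩
    · have hm' : (Sum.inr p : Bdry n) = Sum.inr q := hm
      have hpq : p = q := Sum.inr.inj hm'
      have := congrArg Fin.val hpq
      omega
    · obtain ⟨L', hword, hG', hfrom, hnofst, _⟩ := peelStruct hG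
      have hlen' : (wordOf L').length ≤ N := by
        rw [hword] at hlen; simpa using hlen
      rw [hword, matchOf_cons] at hm
      set g := matchOf (wordOf L') with hgdef
      have hg : Function.Involutive g := matchOf_invol (wordOf L')
      have hf : ∀ x, g x ≠ x := matchOf_fpf (wordOf L')
      by_cases hp1 : p = lo n i
      · rw [hp1, hcomp_lo] at hm; exact absurd hm (by simp)
      by_cases hp2 : p = hi n i
      · rw [hp2, hcomp_hi] at hm; exact absurd hm (by simp)
      rw [hcomp_inl hp1 hp2] at hm
      by_cases hz1 : g (Sum.inl p) = Sum.inl (lo n i)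
      · rw [hz1, cont_lo] at hm
        -- g : p ↔ lo, hi ↔ inr q
        have hploi : g (Sum.inl (lo n i)) = Sum.inl p := by rw [← hz1, hg]
        rcases lt_trichotomy ((p:ℕ)) ((i:ℕ)) with hplt | hpeq | hpgt
        · -- then q ≥ i+1 > p > q: contradiction
          rcases lt_trichotomy ((q:ℕ)) ((i:ℕ)+1) with hqlt | hqeq | hqgt
          · have hqlt' : (q:ℕ) < ((hi n i : Fin n):ℕ) := hqlt
            obtain ⟨pr, hpr, hpr2⟩ := ih L' hlen' hG' (hi n i) q hm hqlt'
            have hpr2' : (i:ℕ) + 1 = (pr.1:ℕ) + 1 := hpr2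
            exact absurd hpr2' (fun h => hnofst pr hpr (by omega))
          · omega
          · omega
        · exact absurd (Fin.ext hpeq) hp1
        · have hpgt' : ((lo n i : Fin n):ℕ) < (p:ℕ) := hpgt
          obtain ⟨pr, hpr, hpr2⟩ := lemP2 N L' hlen' hG' (lo n i) p hploi hpgt'
          exact hfrom (p:ℕ) (by omega) ⟨pr, hpr, hpr2⟩
      by_cases hz2 : g (Sum.inl p) = Sum.inl (hi n i)
      · rw [hz2, cont_hi] at hm
        have hphii : g (Sum.inl (hi n i)) = Sum.inl p := by rw [← hz2, hg]
        rcases lt_trichotomy ((p:ℕ)) ((i:ℕ)+1) with hplt | hpeq | hpgt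
        · have hplt' : (p:ℕ) < ((hi n i : Fin n):ℕ) := hplt
          obtain ⟨pr, hpr, hpr2⟩ := lemP2 N L' hlen' hG' p (hi n i) hz2 hplt'
          have hpr2' : (i:ℕ) + 1 = (pr.1:ℕ) + 1 := hpr2
          exact absurd hpr2' (fun h => hnofst pr hpr (by omega))
        · exact absurd (Fin.ext hpeq) hp2
        · have hpgt' : ((hi n i : Fin n):ℕ) < (p:ℕ) := hpgt
          obtain ⟨pr, hpr, hpr2⟩ := lemP2 N L' hlen' hG' (hi n i) p hphii hpgt'
          exact hfrom (p:ℕ) (by omega) ⟨pr, hpr, hpr2⟩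
      · rw [cont_of_ne hz1 hz2] at hm
        have hpi : (p:ℕ) ≠ (i:ℕ) := fun h => hp1 (Fin.ext h)
        obtain ⟨pr, hpr, hpr2⟩ := ih L' hlen' hG' p q hm hqp
        exact hfrom (p:ℕ) hpi ⟨pr, hpr, hpr2⟩

/-- (P1) the first cap. -/
lemma lemP1 {i j : Fin (n-1)} {L₂ : List (Fin (n-1) × Fin (n-1))} (hG : Good ((i, j) :: L₂)) :
    matchOf (wordOf ((i, j) :: L₂)) (Sum.inl (lo n i)) = Sum.inl (hi n i) := by
  have hji : (j:ℕ) ≤ (i:ℕ) := by cases hG with | cons hji _ _ => exact hji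
  rcases eq_or_lt_of_le hji with hc | hc
  · rw [peel_eq hc, matchOf_cons, hcomp_lo]
  · rw [peel_lt hc, matchOf_cons, hcomp_lo]

lemma hi_ipred {i : Fin (n-1)} (h : 0 < (i:ℕ)) : hi n (ipred i) = lo n i := by
  apply Fin.ext
  show (i:ℕ) - 1 + 1 = (i:ℕ)
  omega

/-- (D3) the point `j₁` is not fixed. -/
lemma lemD3 : ∀ (N : ℕ) (i j : Fin (n-1)) (L₂ : List (Fin (n-1) × Fin (n-1))),
    (wordOf ((i, j) :: L₂)).length ≤ N → Good ((i, j) :: L₂) →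
      matchOf (wordOf ((i, j) :: L₂)) (Sum.inl (lo n j)) ≠ Sum.inr (lo n j) := by
  intro N
  induction N with
  | zero =>
    intro i j L₂ hlen hG
    exfalso
    have hji : (j:ℕ) ≤ (i:ℕ) := by cases hG with | cons hji _ _ => exact hji
    rcases eq_or_lt_of_le hji with hc | hc
    · rw [peel_eq hc] at hlen; simp at hlen
    · rw [peel_lt hc] at hlen; simp at hlen
  | succ N ih =>
    intro i j L₂ hlen hG
    have hji : (j:ℕ) ≤ (i:ℕ) := by cases hG with | cons hji _ _ => exact hji
    have hmem : ∀ p ∈ L₂, (i:ℕ) < (p.1:ℕ) ∧ (j:ℕ) < (p.2:ℕ) := by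
      cases hG with | cons _ hmem _ => exact hmem
    rcases eq_or_lt_of_le hji with hc | hc
    · -- singleton first run: the cap is at (j, j+1)
      have : lo n j = lo n i := Fin.ext hc
      rw [this, lemP1 hG]
      simp
    · -- j < i
      rw [peel_lt hc, matchOf_cons]
      set L' := (ipred i, j) :: L₂ with hL'def
      have hG' : Good L' := good_ipred hG hc
      have hlen' : (wordOf L').length ≤ N := by
        rw [peel_lt hc] at hlen; simpa using hlen
      set g := matchOf (wordOf L') with hgdef
      have hg : Function.Involutive g := matchOf_invol (wordOf L')
      have hf : ∀ x, g x ≠ x := matchOf_fpf (wordOf L')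
      have hnofst : ∀ pr ∈ L', (pr.1:ℕ) ≠ (i:ℕ) := by
        intro pr hpr
        rcases List.mem_cons.1 hpr with h | h
        · subst h; show (i:ℕ) - 1 ≠ (i:ℕ); omega
        · exact ((hmem pr h).1).ne'
      have hj1 : lo n j ≠ lo n i := by
        intro h
        have h' : ((lo n j : Fin n):ℕ) = ((lo n i : Fin n):ℕ) := congrArg Fin.val h
        have h'' : (j:ℕ) = (i:ℕ) := h'
        omega
      have hj2 : lo n j ≠ hi n i := by
        intro h
        have h' : ((lo n j : Fin n):ℕ) = ((hi n i : Fin n):ℕ) := congrArg Fin.val h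
        have h'' : (j:ℕ) = (i:ℕ) + 1 := h'
        omega
      rw [hcomp_inl hj1 hj2]
      by_cases hz1 : g (Sum.inl (lo n j)) = Sum.inl (lo n i)
      · rw [hz1, cont_lo]
        intro hm
        have hql : ((lo n j : Fin n):ℕ) < ((hi n i : Fin n):ℕ) := by
          show (j:ℕ) < (i:ℕ) + 1; omega
        obtain ⟨pr, hpr, hpr2⟩ := lemD5 N L' hlen' hG' (hi n i) (lo n j) hm hql
        have hpr2' : (i:ℕ) + 1 = (pr.1:ℕ) + 1 := hpr2
        exact hnofst pr hpr (by omega)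
      by_cases hz2 : g (Sum.inl (lo n j)) = Sum.inl (hi n i)
      · rw [hz2, cont_hi]
        have hP1 : g (Sum.inl (lo n (ipred i))) = Sum.inl (hi n (ipred i)) := lemP1 hG'
        rw [hi_ipred (by omega)] at hP1
        have : g (Sum.inl (lo n i)) = Sum.inl (lo n (ipred i)) := by
          rw [← hP1, hg]
        rw [this]
        simp
      · rw [cont_of_ne hz1 hz2]
        exact ih (ipred i) j L₂ hlen' hG'

/-- Cancellation: `hcomp i` is injective once the image of the cap point is known. -/
lemma lemK {i : Fin (n-1)} {g g' : Bdry n → Bdry n}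
    (hg : Function.Involutive g) (hf : ∀ x, g x ≠ x)
    (hg' : Function.Involutive g') (hf' : ∀ x, g' x ≠ x)
    (hu : g (Sum.inl (lo n i)) = g' (Sum.inl (lo n i)))
    (hu2 : g (Sum.inl (lo n i)) ≠ Sum.inl (hi n i))
    (hh : hcomp i g = hcomp i g') : g = g' := by
  have hgu : g (g (Sum.inl (lo n i))) = Sum.inl (lo n i) := hg _
  have hg'u : g' (g (Sum.inl (lo n i))) = Sum.inl (lo n i) := by rw [hu]; exact hg' _
  have hv : g (Sum.inl (hi n i)) = g' (Sum.inl (hi n i)) := by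
    have e1 : hcomp i g (g (Sum.inl (lo n i))) = g (Sum.inl (hi n i)) := by
      rw [hcomp_eq_cont (hf _) hu2, hgu, cont_lo]
    have e2 : hcomp i g' (g (Sum.inl (lo n i))) = g' (Sum.inl (hi n i)) := by
      rw [hcomp_eq_cont (hf _) hu2, hg'u, cont_lo]
    rw [← e1, ← e2, hh]
  have hgv : g (g (Sum.inl (hi n i))) = Sum.inl (hi n i) := hg _
  have hg'v : g' (g (Sum.inl (hi n i))) = Sum.inl (hi n i) := by rw [hv]; exact hg' _
  funext x
  by_cases hx1 : x = Sum.inl (lo n i)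
  · rw [hx1]; exact hu
  by_cases hx2 : x = Sum.inl (hi n i)
  · rw [hx2]; exact hv
  by_cases hxu : x = g (Sum.inl (lo n i))
  · rw [hxu, hgu, hg'u]
  by_cases hxv : x = g (Sum.inl (hi n i))
  · rw [hxv, hgv, hg'v]
  · have hgx1 : g x ≠ Sum.inl (lo n i) := by
      intro h
      have h2 := congrArg g h
      rw [hg] at h2
      exact hxu h2
    have hgx2 : g x ≠ Sum.inl (hi n i) := by
      intro h
      have h2 := congrArg g h
      rw [hg] at h2
      exact hxv h2
    have hg'x1 : g' x ≠ Sum.inl (lo n i) := by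
      intro h
      have h2 := congrArg g' h
      rw [hg'] at h2
      exact hxu (by rw [h2, ← hu])
    have hg'x2 : g' x ≠ Sum.inl (hi n i) := by
      intro h
      have h2 := congrArg g' h
      rw [hg'] at h2
      exact hxv (by rw [h2, ← hv])
    have e1 : hcomp i g x = g x := by rw [hcomp_eq_cont hx1 hx2, cont_of_ne hgx1 hgx2]
    have e2 : hcomp i g' x = g' x := by rw [hcomp_eq_cont hx1 hx2, cont_of_ne hg'x1 hg'x2]
    rw [← e1, ← e2, hh]

/-- Main uniqueness: two good run lists with the same matching coincide. -/
lemma mainUnique : ∀ (N : ℕ) (L L' : List (Fin (n-1) × Fin (n-1))),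
    (wordOf L).length ≤ N → Good L → Good L' →
    matchOf (wordOf L) = matchOf (wordOf L') → L = L' := by
  intro N
  induction N with
  | zero =>
    intro L L' hlen hG hG' hmm
    have hw : wordOf L = [] := List.length_eq_zero_iff.1 (Nat.le_zero.1 hlen)
    have hL : L = [] := wordOf_eq_nil hw
    subst hL
    rcases L' with _ | ⟨⟨i', j'⟩, L₂'⟩
    · rfl
    · exfalso
      have h1 := lemP1 hG'
      rw [← hmm] at h1
      have h2 : (Sum.inr (lo n i') : Bdry n) = Sum.inl (hi n i') := h1
      exact nomatch h2
  | succ N ih =>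
    intro L L' hlen hG hG' hmm
    rcases L with _ | ⟨⟨i, j⟩, L₂⟩
    · rcases L' with _ | ⟨⟨i', j'⟩, L₂'⟩
      · rfl
      · exfalso
        have h1 := lemP1 hG'
        rw [← hmm] at h1
        have h2 : (Sum.inr (lo n i') : Bdry n) = Sum.inl (hi n i') := h1
        exact nomatch h2
    rcases L' with _ | ⟨⟨i', j'⟩, L₂'⟩
    · exfalso
      have h1 := lemP1 hG
      rw [hmm] at h1
      have h2 : (Sum.inr (lo n i) : Bdry n) = Sum.inl (hi n i) := h1
      exact nomatch h2
    have hji : (j:ℕ) ≤ (i:ℕ) := by cases hG with | cons hji _ _ => exact hji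
    have hmem : ∀ p ∈ L₂, (i:ℕ) < (p.1:ℕ) ∧ (j:ℕ) < (p.2:ℕ) := by
      cases hG with | cons _ hmem _ => exact hmem
    have hG₂ : Good L₂ := by cases hG with | cons _ _ h => exact h
    have hji' : (j':ℕ) ≤ (i':ℕ) := by cases hG' with | cons hji _ _ => exact hji
    have hmem' : ∀ p ∈ L₂', (i':ℕ) < (p.1:ℕ) ∧ (j':ℕ) < (p.2:ℕ) := by
      cases hG' with | cons _ hmem _ => exact hmem
    have hG₂' : Good L₂' := by cases hG' with | cons _ _ h => exact h
    -- first indices agree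
    have hii : (i:ℕ) = (i':ℕ) := by
      rcases lt_trichotomy ((i:ℕ)) ((i':ℕ)) with h | h | h
      · exfalso
        have h1 := lemP1 hG
        rw [hmm] at h1
        obtain ⟨pr, hpr, hpr2⟩ := lemP2 (wordOf ((i', j') :: L₂')).length _ (le_refl _) hG'
          (lo n i) (hi n i) h1 (by show (i:ℕ) < (i:ℕ) + 1; omega)
        have hpr2' : (i:ℕ) + 1 = (pr.1:ℕ) + 1 := hpr2
        rcases List.mem_cons.1 hpr with hh | hh
        · subst hh
          simp only at hpr2'
          omega
        · have := (hmem' pr hh).1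
          omega
      · exact h
      · exfalso
        have h1 := lemP1 hG'
        rw [← hmm] at h1
        obtain ⟨pr, hpr, hpr2⟩ := lemP2 (wordOf ((i, j) :: L₂)).length _ (le_refl _) hG
          (lo n i') (hi n i') h1 (by show (i':ℕ) < (i':ℕ) + 1; omega)
        have hpr2' : (i':ℕ) + 1 = (pr.1:ℕ) + 1 := hpr2
        rcases List.mem_cons.1 hpr with hh | hh
        · subst hh
          simp only at hpr2'
          omega
        · have := (hmem pr hh).1
          omega
    have hjj : (j:ℕ) = (j':ℕ) := by
      rcases lt_trichotomy ((j:ℕ)) ((j':ℕ)) with h | h | h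
      · exfalso
        have h1 := lemD1 (wordOf ((i', j') :: L₂')).length _ (le_refl _) hG' (lo n j) ?hp
        case hp =>
          intro pr hpr
          rcases List.mem_cons.1 hpr with hh | hh
          · subst hh; exact h
          · show (j:ℕ) < (pr.2:ℕ)
            have := (hmem' pr hh).2
            omega
        rw [← hmm] at h1
        exact lemD3 (wordOf ((i, j) :: L₂)).length i j L₂ (le_refl _) hG h1
      · exact h
      · exfalso
        have h1 := lemD1 (wordOf ((i, j) :: L₂)).length _ (le_refl _) hG (lo n j') ?hp
        case hp =>
          intro pr hpr
          rcases List.mem_cons.1 hpr with hh | hh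
          · subst hh; exact h
          · show (j':ℕ) < (pr.2:ℕ)
            have := (hmem pr hh).2
            omega
        rw [hmm] at h1
        exact lemD3 (wordOf ((i', j') :: L₂')).length i' j' L₂' (le_refl _) hG' h1
    have hieq : i = i' := Fin.ext hii
    subst hieq
    have hjeq : j = j' := Fin.ext hjj
    subst hjeq
    rcases eq_or_lt_of_le hji with hc | hc
    · -- singleton first run
      rw [peel_eq (L₂ := L₂) hc, peel_eq (L₂ := L₂') hc] at hmm
      have hlen₂ : (wordOf L₂).length ≤ N := by
        rw [peel_eq (L₂ := L₂) hc] at hlen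
        simpa using hlen
      have hul : matchOf (wordOf L₂) (Sum.inl (lo n i)) = Sum.inr (lo n i) := by
        refine lemD1 (wordOf L₂).length _ (le_refl _) hG₂ (lo n i) (fun pr hpr => ?_)
        show (i:ℕ) < (pr.2:ℕ)
        have := (hmem pr hpr).2
        omega
      have hur : matchOf (wordOf L₂') (Sum.inl (lo n i)) = Sum.inr (lo n i) := by
        refine lemD1 (wordOf L₂').length _ (le_refl _) hG₂' (lo n i) (fun pr hpr => ?_)
        show (i:ℕ) < (pr.2:ℕ)
        have := (hmem' pr hpr).2
        omega
      have hgg : matchOf (wordOf L₂) = matchOf (wordOf L₂') := by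
        refine lemK (matchOf_invol _) (matchOf_fpf _) (matchOf_invol _) (matchOf_fpf _)
          (hul.trans hur.symm) (by rw [hul]; simp) ?_
        exact hmm
      rw [ih L₂ L₂' hlen₂ hG₂ hG₂' hgg]
    · -- long first run
      rw [peel_lt (L₂ := L₂) hc, peel_lt (L₂ := L₂') hc] at hmm
      have hGP : Good ((ipred i, j) :: L₂) := good_ipred hG hc
      have hGP' : Good ((ipred i, j) :: L₂') := good_ipred hG' hc
      have hlenP : (wordOf ((ipred i, j) :: L₂)).length ≤ N := by
        rw [peel_lt (L₂ := L₂) hc] at hlen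
        simpa using hlen
      have hipos : 0 < (i:ℕ) := by omega
      have hul : matchOf (wordOf ((ipred i, j) :: L₂)) (Sum.inl (lo n i)) =
          Sum.inl (lo n (ipred i)) := by
        have h1 := lemP1 hGP
        rw [hi_ipred hipos] at h1
        have h2 := congrArg (matchOf (wordOf ((ipred i, j) :: L₂))) h1
        rw [matchOf_invol _ _] at h2
        exact h2.symm
      have hur : matchOf (wordOf ((ipred i, j) :: L₂')) (Sum.inl (lo n i)) =
          Sum.inl (lo n (ipred i)) := by
        have h1 := lemP1 hGP'
        rw [hi_ipred hipos] at h1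
        have h2 := congrArg (matchOf (wordOf ((ipred i, j) :: L₂'))) h1
        rw [matchOf_invol _ _] at h2
        exact h2.symm
      have hgg : matchOf (wordOf ((ipred i, j) :: L₂)) =
          matchOf (wordOf ((ipred i, j) :: L₂')) := by
        refine lemK (matchOf_invol _) (matchOf_fpf _) (matchOf_invol _) (matchOf_fpf _)
          (hul.trans hur.symm) ?_ hmm
        rw [hul]
        intro hcon
        have := congrArg Fin.val (Sum.inl.inj hcon)
        have h3 : (i:ℕ) - 1 = (i:ℕ) + 1 := this
        omega
      have := ih _ _ hlenP hGP hGP' hgg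
      have hta : L₂ = L₂' := (List.cons.injEq _ _ _ _ ▸ this).2
      rw [hta]



variable {n : ℕ}

lemma goodOfFn : ∀ {r : ℕ} (I J : Fin r → Fin (n-1)), StrictMono I → StrictMono J →
    (∀ k, J k ≤ I k) → Good (List.ofFn fun k => (I k, J k)) := by
  intro r
  induction r with
  | zero =>
    intro I J _ _ _
    rw [List.ofFn_zero]
    exact Good.nil
  | succ r ih =>
    intro I J hI hJ hJI
    rw [List.ofFn_succ]
    refine Good.cons (hJI 0) ?_ (ih (fun k => I k.succ) (fun k => J k.succ)
      (fun a b hab => hI (by rw [Fin.lt_def] at hab ⊢; simp only [Fin.val_succ]; omega))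
      (fun a b hab => hJ (by rw [Fin.lt_def] at hab ⊢; simp only [Fin.val_succ]; omega))
      (fun k => hJI k.succ))
    intro p hp
    rw [List.mem_ofFn] at hp
    obtain ⟨k, hk⟩ := hp
    rw [← hk]
    have h0 : (0 : Fin (r+1)) < k.succ := by
      rw [Fin.lt_def]
      simp [Fin.val_succ]
    exact ⟨hI h0, hJ h0⟩



end Parts

/-- Uniqueness of the Jones normal form of a diagram: if two Jones normal form
products `(E_{i_1}⋯E_{j_1})⋯(E_{i_r}⋯E_{j_r})` and
`(E_{i'_1}⋯E_{j'_1})⋯(E_{i'_s}⋯E_{j'_s})` are equal as Temperley–Lieb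
diagrams, then `r = s` and the index sequences coincide. -/
theorem jones_normal_form_unique {r s : ℕ}
    (I J : Fin r → Fin (n - 1)) (I' J' : Fin s → Fin (n - 1))
    (hI : StrictMono I) (hJ : StrictMono J) (hJI : ∀ k, J k ≤ I k)
    (hI' : StrictMono I') (hJ' : StrictMono J') (hJI' : ∀ k, J' k ≤ I' k)
    (heq : ∀ x y : Bdry n,
      wordDiag n (jnfWord n I J) x y ↔ wordDiag n (jnfWord n I' J') x y) :
    r = s ∧ ∀ (k : Fin r) (k' : Fin s), (k : ℕ) = (k' : ℕ) →
      I k = I' k' ∧ J k = J' k' := by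
  have hmEq : matchOf (jnfWord n I J) = matchOf (jnfWord n I' J') := by
    funext x
    have hx : wordDiag n (jnfWord n I J) x (matchOf (jnfWord n I J) x) :=
      (wordDiag_iff _ x _).2 ⟨Ne.symm (matchOf_fpf _ x), rfl⟩
    have h2 := (heq x _).1 hx
    exact ((wordDiag_iff _ x _).1 h2).2.symm
  have hGL := goodOfFn I J hI hJ hJI
  have hGL' := goodOfFn I' J' hI' hJ' hJI'
  rw [jnfWord_eq I J, jnfWord_eq I' J'] at hmEq
  have hLL := mainUnique (wordOf (List.ofFn fun k => (I k, J k))).length _ _ (le_refl _)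
    hGL hGL' hmEq
  have hrs : r = s := by
    have h2 := congrArg List.length hLL
    simpa using h2
  subst hrs
  refine ⟨rfl, ?_⟩
  intro k k' hkk'
  have hk : k' = k := Fin.ext hkk'.symm
  subst hk
  have h3 : (fun t => (I t, J t)) = (fun t => (I' t, J' t)) := List.ofFn_injective hLL
  have h4 := congrFun h3 k'
  exact ⟨congrArg Prod.fst h4, congrArg Prod.snd h4⟩

end TLDiag
end

section
/- The number of Jones normal forms (without \tau factor) on generators e_1,...,e_{n-1} equals the n-th Catalan number: the number of pairs of sequences i_1 < ... < i_r, j_1 < ... < j_r with j_k \le i_k \le n-1 for all k (including the empty pair r = 0) is binomial(2n,n)/(n+1). -/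
private def JP (m : ℕ) : Type :=
  {p : Σ r : ℕ, (Fin r → Fin m) × (Fin r → Fin m) //
      StrictMono p.2.1 ∧ StrictMono p.2.2 ∧ ∀ k, p.2.2 k ≤ p.2.1 k}

private def JS (m : ℕ) : Type :=
  {p : Σ r : ℕ, (Fin r → Fin m) × (Fin r → Fin m) //
      StrictMono p.2.1 ∧ StrictMono p.2.2 ∧ ∀ k, p.2.2 k < p.2.1 k}

/-- the empty pair -/
private def JPempty (m : ℕ) : JP m :=
  ⟨⟨0, Fin.elim0, Fin.elim0⟩, fun k => k.elim0, fun k => k.elim0, fun k => k.elim0⟩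

private theorem r_le {m r : ℕ} {a : Fin r → Fin m} (ha : StrictMono a) : r ≤ m := by
  simpa using Fintype.card_le_of_injective a ha.injective

private theorem finite_aux {m : ℕ} {C : (Σ r : ℕ, (Fin r → Fin m) × (Fin r → Fin m)) → Prop}
    (hC : ∀ x, C x → StrictMono x.2.1) : Finite {x // C x} := by
  apply Finite.of_injective
    (β := Σ r : Fin (m+1), (Fin r.val → Fin m) × (Fin r.val → Fin m))
    (fun p => ⟨⟨p.1.1, Nat.lt_succ_of_le (r_le (hC _ p.2))⟩, p.1.2⟩)
  rintro ⟨⟨r, a, b⟩, hp⟩ ⟨⟨r', a', b'⟩, hq⟩ h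
  obtain ⟨hfst, hsnd⟩ := Sigma.ext_iff.mp h
  have hr : r = r' := congrArg Fin.val hfst
  subst hr
  have hab : (a, b) = (a', b') := eq_of_heq hsnd
  apply Subtype.ext
  show (⟨r, a, b⟩ : Σ r : ℕ, (Fin r → Fin m) × (Fin r → Fin m)) = ⟨r, a', b'⟩
  rw [show a = a' from congrArg Prod.fst hab, show b = b' from congrArg Prod.snd hab]

private instance (m : ℕ) : Finite (JP m) := finite_aux (fun _ h => h.1)
private instance (m : ℕ) : Finite (JS m) := finite_aux (fun _ h => h.1)

private theorem card_eq_one {m : ℕ} (hm : m = 0) : Nat.card (JP m) = 1 := by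
  subst hm
  rw [Nat.card_eq_one_iff_unique]
  constructor
  · constructor
    rintro ⟨⟨r, a, b⟩, hp⟩ ⟨⟨r', a', b'⟩, hq⟩
    have hr : r = 0 := by
      by_contra h
      exact (a ⟨0, Nat.pos_of_ne_zero h⟩).elim0
    have hr' : r' = 0 := by
      by_contra h
      exact (a' ⟨0, Nat.pos_of_ne_zero h⟩).elim0
    subst hr; subst hr'
    apply Subtype.ext
    show (⟨0, a, b⟩ : Σ r : ℕ, (Fin r → Fin 0) × (Fin r → Fin 0)) = ⟨0, a', b'⟩
    have h1 : a = a' := funext fun k => k.elim0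
    have h2 : b = b' := funext fun k => k.elim0
    rw [h1, h2]
  · exact ⟨JPempty 0⟩

private theorem cardJS0 : Nat.card (JS 0) = 1 := by
  rw [Nat.card_eq_one_iff_unique]
  constructor
  · constructor
    rintro ⟨⟨r, a, b⟩, hp⟩ ⟨⟨r', a', b'⟩, hq⟩
    have hr : r = 0 := by
      by_contra h
      exact (a ⟨0, Nat.pos_of_ne_zero h⟩).elim0
    have hr' : r' = 0 := by
      by_contra h
      exact (a' ⟨0, Nat.pos_of_ne_zero h⟩).elim0
    subst hr; subst hr'
    apply Subtype.ext
    show (⟨0, a, b⟩ : Σ r : ℕ, (Fin r → Fin 0) × (Fin r → Fin 0)) = ⟨0, a', b'⟩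
    have h1 : a = a' := funext fun k => k.elim0
    have h2 : b = b' := funext fun k => k.elim0
    rw [h1, h2]
  · exact ⟨⟨⟨0, Fin.elim0, Fin.elim0⟩, fun k => k.elim0, fun k => k.elim0, fun k => k.elim0⟩⟩


/-- an ext lemma for such subtypes -/
private theorem ext_helper {m : ℕ} {C : (Σ r : ℕ, (Fin r → Fin m) × (Fin r → Fin m)) → Prop}
    (p q : {x // C x}) (h : p.1.1 = q.1.1)
    (ha : ∀ k : Fin p.1.1, p.1.2.1 k = q.1.2.1 (Fin.cast h k))
    (hb : ∀ k : Fin p.1.1, p.1.2.2 k = q.1.2.2 (Fin.cast h k)) : p = q := by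
  obtain ⟨⟨r, a, b⟩, hp⟩ := p
  obtain ⟨⟨r', a', b'⟩, hq⟩ := q
  dsimp at h ha hb
  subst h
  apply Subtype.ext
  show (⟨r, a, b⟩ : Σ r : ℕ, (Fin r → Fin m) × (Fin r → Fin m)) = ⟨r, a', b'⟩
  have h1 : a = a' := funext ha
  have h2 : b = b' := funext hb
  rw [h1, h2]

private theorem ext_inv {m : ℕ} {C : (Σ r : ℕ, (Fin r → Fin m) × (Fin r → Fin m)) → Prop}
    {p q : {x // C x}} (h : p = q) : ∃ hr : p.1.1 = q.1.1,
      (∀ k, p.1.2.1 k = q.1.2.1 (Fin.cast hr k)) ∧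
      (∀ k, p.1.2.2 k = q.1.2.2 (Fin.cast hr k)) := by
  subst h; exact ⟨rfl, fun k => rfl, fun k => rfl⟩

/-- strict pairs on `Fin (s+1)` are pairs on `Fin s`, lowering the top row by one -/
private def JSequiv (s : ℕ) : JS (s + 1) ≃ JP s where
  toFun p :=
    ⟨⟨p.1.1,
      fun k => ⟨(p.1.2.1 k).val - 1, by
        have h1 := (p.1.2.1 k).isLt
        have h2 := p.2.2.2 k
        simp only [Fin.lt_def] at h2
        omega⟩,
      fun k => ⟨(p.1.2.2 k).val, by
        have h1 := p.2.2.2 k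
        have h2 := (p.1.2.1 k).isLt
        simp only [Fin.lt_def] at h1
        omega⟩⟩, by
      obtain ⟨⟨r, a, b⟩, ha, hb, hab⟩ := p
      refine ⟨?_, ?_, ?_⟩
      · intro k l hkl
        have h1 := ha hkl
        have h2 := hab k
        simp only [Fin.lt_def] at *
        omega
      · intro k l hkl
        have h1 := hb hkl
        simp only [Fin.lt_def] at *
        omega
      · intro k
        have h1 := hab k
        simp only [Fin.lt_def] at h1
        simp only [Fin.le_def]
        omega⟩
  invFun p :=
    ⟨⟨p.1.1,
      fun k => ⟨(p.1.2.1 k).val + 1, by have := (p.1.2.1 k).isLt; omega⟩,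
      fun k => ⟨(p.1.2.2 k).val, by have := (p.1.2.2 k).isLt; omega⟩⟩, by
      obtain ⟨⟨r, a, b⟩, ha, hb, hab⟩ := p
      refine ⟨?_, ?_, ?_⟩
      · intro k l hkl
        have h1 := ha hkl
        simp only [Fin.lt_def] at *
        omega
      · intro k l hkl
        have h1 := hb hkl
        simp only [Fin.lt_def] at *
        omega
      · intro k
        have h1 := hab k
        simp only [Fin.le_def] at h1
        simp only [Fin.lt_def]
        omega⟩
  left_inv p := by
    obtain ⟨⟨r, a, b⟩, ha, hb, hab⟩ := p
    refine ext_helper (C := fun p => StrictMono p.2.1 ∧ StrictMono p.2.2 ∧ ∀ k, p.2.2 k < p.2.1 k)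
      _ _ rfl (fun k => ?_) (fun k => ?_)
    · have h1 := hab k
      simp only [Fin.lt_def] at h1
      apply Fin.ext
      simp only [Fin.cast_eq_self]
      show (a k).val - 1 + 1 = (a k).val
      omega
    · apply Fin.ext
      rfl
  right_inv p := by
    obtain ⟨⟨r, a, b⟩, ha, hb, hab⟩ := p
    refine ext_helper (C := fun p => StrictMono p.2.1 ∧ StrictMono p.2.2 ∧ ∀ k, p.2.2 k ≤ p.2.1 k)
      _ _ rfl (fun k => ?_) (fun k => ?_)
    · apply Fin.ext
      simp only [Fin.cast_eq_self]
      show (a k).val + 1 - 1 = (a k).val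
      omega
    · apply Fin.ext
      rfl

/-- glue a strict pair below value `tv`, the diagonal element `tv`, and a pair above `tv` -/
private def glueF {m r₁ r₂ tv : ℕ} (htm : tv < m) (f₁ : Fin r₁ → Fin tv)
    (f₂ : Fin r₂ → Fin (m - tv - 1)) : Fin (r₁ + 1 + r₂) → Fin m :=
  fun k =>
    if hk : k.val < r₁ then ⟨(f₁ ⟨k.val, hk⟩).val, by have := (f₁ ⟨k.val, hk⟩).isLt; omega⟩
    else if hk2 : k.val = r₁ then ⟨tv, htm⟩
    else ⟨tv + 1 + (f₂ ⟨k.val - (r₁ + 1), by have := k.isLt; omega⟩).val, by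
      have := (f₂ ⟨k.val - (r₁ + 1), by have := k.isLt; omega⟩).isLt; omega⟩

private theorem glueF_lt {m r₁ r₂ tv : ℕ} (htm : tv < m) (f₁ : Fin r₁ → Fin tv)
    (f₂ : Fin r₂ → Fin (m - tv - 1)) (k : Fin (r₁ + 1 + r₂)) (hk : k.val < r₁) :
    (glueF htm f₁ f₂ k).val = (f₁ ⟨k.val, hk⟩).val := by
  simp only [glueF, dif_pos hk]

private theorem glueF_eq {m r₁ r₂ tv : ℕ} (htm : tv < m) (f₁ : Fin r₁ → Fin tv)
    (f₂ : Fin r₂ → Fin (m - tv - 1)) (k : Fin (r₁ + 1 + r₂)) (hk : k.val = r₁) :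
    (glueF htm f₁ f₂ k).val = tv := by
  have hk' : ¬ k.val < r₁ := by omega
  simp only [glueF, dif_neg hk', dif_pos hk]

private theorem glueF_gt {m r₁ r₂ tv : ℕ} (htm : tv < m) (f₁ : Fin r₁ → Fin tv)
    (f₂ : Fin r₂ → Fin (m - tv - 1)) (k : Fin (r₁ + 1 + r₂)) (hk : r₁ < k.val) :
    (glueF htm f₁ f₂ k).val
      = tv + 1 + (f₂ ⟨k.val - (r₁ + 1), by have := k.isLt; omega⟩).val := by
  have hk' : ¬ k.val < r₁ := by omega
  have hk'' : ¬ k.val = r₁ := by omega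
  simp only [glueF, dif_neg hk', dif_neg hk'']

private theorem glueF_strictMono {m r₁ r₂ tv : ℕ} (htm : tv < m) {f₁ : Fin r₁ → Fin tv}
    {f₂ : Fin r₂ → Fin (m - tv - 1)} (h₁ : StrictMono f₁) (h₂ : StrictMono f₂) :
    StrictMono (glueF htm f₁ f₂) := by
  intro k l hkl
  rw [Fin.lt_def] at hkl ⊢
  rcases Nat.lt_trichotomy k.val r₁ with hk | hk | hk
  · rcases Nat.lt_trichotomy l.val r₁ with hl | hl | hl
    · rw [glueF_lt htm f₁ f₂ k hk, glueF_lt htm f₁ f₂ l hl]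
      exact h₁ (show (⟨k.val, hk⟩ : Fin r₁) < ⟨l.val, hl⟩ from hkl)
    · rw [glueF_lt htm f₁ f₂ k hk, glueF_eq htm f₁ f₂ l hl]
      exact (f₁ ⟨k.val, hk⟩).isLt
    · rw [glueF_lt htm f₁ f₂ k hk, glueF_gt htm f₁ f₂ l hl]
      have := (f₁ ⟨k.val, hk⟩).isLt
      omega
  · rcases Nat.lt_trichotomy l.val r₁ with hl | hl | hl
    · omega
    · omega
    · rw [glueF_eq htm f₁ f₂ k hk, glueF_gt htm f₁ f₂ l hl]
      omega
  · have hl : r₁ < l.val := by omega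
    rw [glueF_gt htm f₁ f₂ k hk, glueF_gt htm f₁ f₂ l hl]
    have := h₂ (show (⟨k.val - (r₁+1), by have := k.isLt; omega⟩ : Fin r₂)
      < ⟨l.val - (r₁+1), by have := l.isLt; omega⟩ from by
        rw [Fin.lt_def]; simp only; omega)
    rw [Fin.lt_def] at this
    omega

private theorem glueF_le {m r₁ r₂ tv : ℕ} (htm : tv < m) {f₁ g₁ : Fin r₁ → Fin tv}
    {f₂ g₂ : Fin r₂ → Fin (m - tv - 1)} (h₁ : ∀ i, g₁ i < f₁ i) (h₂ : ∀ j, g₂ j ≤ f₂ j) :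
    ∀ k, glueF htm g₁ g₂ k ≤ glueF htm f₁ f₂ k := by
  intro k
  rw [Fin.le_def]
  rcases Nat.lt_trichotomy k.val r₁ with hk | hk | hk
  · rw [glueF_lt htm f₁ f₂ k hk, glueF_lt htm g₁ g₂ k hk]
    exact le_of_lt (h₁ ⟨k.val, hk⟩)
  · rw [glueF_eq htm f₁ f₂ k hk, glueF_eq htm g₁ g₂ k hk]
  · rw [glueF_gt htm f₁ f₂ k hk, glueF_gt htm g₁ g₂ k hk]
    have := h₂ ⟨k.val - (r₁+1), by have := k.isLt; omega⟩
    rw [Fin.le_def] at this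
    omega

/-- the gluing map of the first-return decomposition -/
private def Gmap (m : ℕ) (x : Σ t : Fin (m + 1), JS t.val × JP (m - t.val - 1)) : JP m :=
  if h : x.1.val = m then
    ⟨⟨x.2.1.1.1, fun k => Fin.cast h (x.2.1.1.2.1 k), fun k => Fin.cast h (x.2.1.1.2.2 k)⟩, by
      refine ⟨?_, ?_, ?_⟩
      · intro k l hkl
        have := x.2.1.2.1 hkl
        rw [Fin.lt_def] at this ⊢
        simpa using this
      · intro k l hkl
        have := x.2.1.2.2.1 hkl
        rw [Fin.lt_def] at this ⊢
        simpa using this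
      · intro k
        have := x.2.1.2.2.2 k
        rw [Fin.lt_def] at this
        rw [Fin.le_def]
        simpa using le_of_lt this⟩
  else
    ⟨⟨x.2.1.1.1 + 1 + x.2.2.1.1,
      glueF (by have := x.1.isLt; omega) x.2.1.1.2.1 x.2.2.1.2.1,
      glueF (by have := x.1.isLt; omega) x.2.1.1.2.2 x.2.2.1.2.2⟩,
      glueF_strictMono _ x.2.1.2.1 x.2.2.2.1,
      glueF_strictMono _ x.2.1.2.2.1 x.2.2.2.2.1,
      glueF_le _ x.2.1.2.2.2 x.2.2.2.2.2⟩

private theorem JP_subsingleton {k : ℕ} (hk : k = 0) : Subsingleton (JP k) := by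
  subst hk
  constructor
  rintro ⟨⟨r, a, b⟩, hp⟩ ⟨⟨r', a', b'⟩, hq⟩
  have hr : r = 0 := by
    by_contra h
    exact (a ⟨0, Nat.pos_of_ne_zero h⟩).elim0
  have hr' : r' = 0 := by
    by_contra h
    exact (a' ⟨0, Nat.pos_of_ne_zero h⟩).elim0
  subst hr; subst hr'
  apply Subtype.ext
  show (⟨0, a, b⟩ : Σ r : ℕ, (Fin r → Fin 0) × (Fin r → Fin 0)) = ⟨0, a', b'⟩
  have h1 : a = a' := funext fun k => k.elim0
  have h2 : b = b' := funext fun k => k.elim0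
  rw [h1, h2]

private theorem Gmap_inj (m : ℕ) : Function.Injective (Gmap m) := by
  rintro ⟨⟨tv, htv⟩, ⟨⟨r₁, f₁, g₁⟩, hf₁s, hg₁s, h₁lt⟩, ⟨⟨r₂, f₂, g₂⟩, hf₂s, hg₂s, h₂le⟩⟩
    ⟨⟨tv', htv'⟩, ⟨⟨r₁', f₁', g₁'⟩, hf₁s', hg₁s', h₁lt'⟩, ⟨⟨r₂', f₂', g₂'⟩, hf₂s', hg₂s', h₂le'⟩⟩ h
  simp only [Gmap] at h
  by_cases h1 : tv = m <;> by_cases h1' : tv' = m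
  · -- both are the "no diagonal" case
    erw [dif_pos h1, dif_pos h1'] at h
    obtain ⟨hr, hA, hB⟩ := ext_inv h
    dsimp at hr hA hB
    have htt : tv = tv' := by omega
    subst htt
    subst hr
    have hf : f₁ = f₁' := by
      funext i
      have := congrArg Fin.val (hA i)
      simp only [Fin.cast_eq_self, Fin.coe_cast] at this
      exact Fin.ext this
    have hg : g₁ = g₁' := by
      funext i
      have := congrArg Fin.val (hB i)
      simp only [Fin.cast_eq_self, Fin.coe_cast] at this
      exact Fin.ext this
    subst hf; subst hg
    have hz : m - (⟨tv, htv⟩ : Fin (m+1)).val - 1 = 0 := by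
      have hv : (⟨tv, htv⟩ : Fin (m+1)).val = tv := rfl
      omega
    have hR := @Subsingleton.elim (JP (m - (⟨tv, htv⟩ : Fin (m+1)).val - 1))
      (JP_subsingleton hz) ⟨⟨r₂, f₂, g₂⟩, hf₂s, hg₂s, h₂le⟩
      ⟨⟨r₂', f₂', g₂'⟩, hf₂s', hg₂s', h₂le'⟩
    rw [hR]
  · -- cross case : contradiction
    exfalso
    erw [dif_pos h1, dif_neg h1'] at h
    obtain ⟨hr, hA, hB⟩ := ext_inv h
    dsimp at hr hA hB
    have hkv : r₁' < r₁ := by omega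
    have hA' := congrArg Fin.val (hA ⟨r₁', hkv⟩)
    have hB' := congrArg Fin.val (hB ⟨r₁', hkv⟩)
    rw [Fin.coe_cast, glueF_eq _ _ _ _ (show (Fin.cast hr ⟨r₁', hkv⟩).val = r₁' from rfl)] at hA'
    rw [Fin.coe_cast, glueF_eq _ _ _ _ (show (Fin.cast hr ⟨r₁', hkv⟩).val = r₁' from rfl)] at hB'
    have := h₁lt ⟨r₁', hkv⟩
    rw [Fin.lt_def] at this
    dsimp at this
    omega
  · -- cross case : contradiction
    exfalso
    erw [dif_neg h1, dif_pos h1'] at h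
    obtain ⟨hr, hA, hB⟩ := ext_inv h
    dsimp at hr hA hB
    have hkv : r₁ < r₁ + 1 + r₂ := by omega
    have hA' := congrArg Fin.val (hA ⟨r₁, hkv⟩)
    have hB' := congrArg Fin.val (hB ⟨r₁, hkv⟩)
    rw [glueF_eq _ _ _ _ (show ((⟨r₁, hkv⟩ : Fin (r₁ + 1 + r₂))).val = r₁ from rfl),
      Fin.coe_cast] at hA'
    rw [glueF_eq _ _ _ _ (show ((⟨r₁, hkv⟩ : Fin (r₁ + 1 + r₂))).val = r₁ from rfl),
      Fin.coe_cast] at hB'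
    have hplt : r₁ < r₁' := by omega
    have hcast : Fin.cast hr ⟨r₁, hkv⟩ = ⟨r₁, hplt⟩ := rfl
    rw [hcast] at hA' hB'
    have hlt := h₁lt' ⟨r₁, hplt⟩
    rw [Fin.lt_def] at hlt
    dsimp only at hlt
    omega
  · -- main case
    erw [dif_neg h1, dif_neg h1'] at h
    obtain ⟨hr, hA, hB⟩ := ext_inv h
    dsimp at hr hA hB
    -- step 1 : r₁ = r₁'
    have hrr : r₁ = r₁' := by
      rcases Nat.lt_trichotomy r₁ r₁' with hc | hc | hc
      · exfalso
        have hkv : r₁ < r₁ + 1 + r₂ := by omega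
        have hA' := congrArg Fin.val (hA ⟨r₁, hkv⟩)
        have hB' := congrArg Fin.val (hB ⟨r₁, hkv⟩)
        rw [glueF_eq _ _ _ _ (show ((⟨r₁, hkv⟩ : Fin (r₁ + 1 + r₂))).val = r₁ from rfl),
          glueF_lt _ _ _ _ (show (Fin.cast hr ⟨r₁, hkv⟩).val < r₁' from hc)] at hA'
        rw [glueF_eq _ _ _ _ (show ((⟨r₁, hkv⟩ : Fin (r₁ + 1 + r₂))).val = r₁ from rfl),
          glueF_lt _ _ _ _ (show (Fin.cast hr ⟨r₁, hkv⟩).val < r₁' from hc)] at hB'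
        have hlt := h₁lt' ⟨(Fin.cast hr ⟨r₁, hkv⟩).val, hc⟩
        dsimp only at hlt
        rw [Fin.lt_def] at hlt
        dsimp only at hlt
        omega
      · exact hc
      · exfalso
        have hkv : r₁' < r₁ + 1 + r₂ := by omega
        have hA' := congrArg Fin.val (hA ⟨r₁', hkv⟩)
        have hB' := congrArg Fin.val (hB ⟨r₁', hkv⟩)
        rw [glueF_lt _ _ _ _ (show ((⟨r₁', hkv⟩ : Fin (r₁ + 1 + r₂))).val < r₁ from hc),
          glueF_eq _ _ _ _ (show (Fin.cast hr ⟨r₁', hkv⟩).val = r₁' from rfl)] at hA'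
        rw [glueF_lt _ _ _ _ (show ((⟨r₁', hkv⟩ : Fin (r₁ + 1 + r₂))).val < r₁ from hc),
          glueF_eq _ _ _ _ (show (Fin.cast hr ⟨r₁', hkv⟩).val = r₁' from rfl)] at hB'
        dsimp only at hA' hB'
        have hlt := h₁lt ⟨r₁', hc⟩
        rw [Fin.lt_def] at hlt
        dsimp only at hlt
        omega
    subst hrr
    have hrr2 : r₂ = r₂' := by omega
    subst hrr2
    -- step 2 : tv = tv'
    have hkv : r₁ < r₁ + 1 + r₂ := by omega
    have htt : tv = tv' := by
      have hA' := congrArg Fin.val (hA ⟨r₁, hkv⟩)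
      rw [glueF_eq _ _ _ _ (show ((⟨r₁, hkv⟩ : Fin (r₁ + 1 + r₂))).val = r₁ from rfl),
        glueF_eq _ _ _ _ (show (Fin.cast hr ⟨r₁, hkv⟩).val = r₁ from rfl)] at hA'
      exact hA'
    subst htt
    -- step 3 : functions agree
    have hf1 : f₁ = f₁' := by
      funext i
      have hiv : i.val < r₁ + 1 + r₂ := by have := i.isLt; omega
      have hA' := congrArg Fin.val (hA ⟨i.val, hiv⟩)
      rw [glueF_lt _ _ _ _ (show ((⟨i.val, hiv⟩ : Fin (r₁ + 1 + r₂))).val < r₁ from i.isLt),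
        glueF_lt _ _ _ _ (show (Fin.cast hr ⟨i.val, hiv⟩).val < r₁ from i.isLt)] at hA'
      apply Fin.ext
      simpa [Fin.eta] using hA'
    have hg1 : g₁ = g₁' := by
      funext i
      have hiv : i.val < r₁ + 1 + r₂ := by have := i.isLt; omega
      have hB' := congrArg Fin.val (hB ⟨i.val, hiv⟩)
      rw [glueF_lt _ _ _ _ (show ((⟨i.val, hiv⟩ : Fin (r₁ + 1 + r₂))).val < r₁ from i.isLt),
        glueF_lt _ _ _ _ (show (Fin.cast hr ⟨i.val, hiv⟩).val < r₁ from i.isLt)] at hB'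
      apply Fin.ext
      simpa [Fin.eta] using hB'
    have hf2 : f₂ = f₂' := by
      funext j
      have hjv : r₁ + 1 + j.val < r₁ + 1 + r₂ := by have := j.isLt; omega
      have hA' := congrArg Fin.val (hA ⟨r₁ + 1 + j.val, hjv⟩)
      rw [glueF_gt _ _ _ _ (show r₁ < ((⟨r₁ + 1 + j.val, hjv⟩ : Fin (r₁ + 1 + r₂))).val by
          dsimp; omega),
        glueF_gt _ _ _ _ (show r₁ < (Fin.cast hr ⟨r₁ + 1 + j.val, hjv⟩).val by
          dsimp [Fin.coe_cast]; omega)] at hA'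
      dsimp only at hA'
      have hidx : ∀ (hp : (Fin.cast hr ⟨r₁ + 1 + j.val, hjv⟩).val - (r₁ + 1) < r₂),
          (⟨(Fin.cast hr ⟨r₁ + 1 + j.val, hjv⟩).val - (r₁ + 1), hp⟩ : Fin r₂) = j :=
        fun hp => Fin.ext (by simp)
      have hidx2 : ∀ (hp : r₁ + 1 + j.val - (r₁ + 1) < r₂),
          (⟨r₁ + 1 + j.val - (r₁ + 1), hp⟩ : Fin r₂) = j := fun hp => Fin.ext (by dsimp; omega)
      rw [hidx, hidx2] at hA'
      apply Fin.ext
      omega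
    have hg2 : g₂ = g₂' := by
      funext j
      have hjv : r₁ + 1 + j.val < r₁ + 1 + r₂ := by have := j.isLt; omega
      have hB' := congrArg Fin.val (hB ⟨r₁ + 1 + j.val, hjv⟩)
      rw [glueF_gt _ _ _ _ (show r₁ < ((⟨r₁ + 1 + j.val, hjv⟩ : Fin (r₁ + 1 + r₂))).val by
          dsimp; omega),
        glueF_gt _ _ _ _ (show r₁ < (Fin.cast hr ⟨r₁ + 1 + j.val, hjv⟩).val by
          dsimp [Fin.coe_cast]; omega)] at hB'
      dsimp only at hB'
      have hidx : ∀ (hp : (Fin.cast hr ⟨r₁ + 1 + j.val, hjv⟩).val - (r₁ + 1) < r₂),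
          (⟨(Fin.cast hr ⟨r₁ + 1 + j.val, hjv⟩).val - (r₁ + 1), hp⟩ : Fin r₂) = j :=
        fun hp => Fin.ext (by simp)
      have hidx2 : ∀ (hp : r₁ + 1 + j.val - (r₁ + 1) < r₂),
          (⟨r₁ + 1 + j.val - (r₁ + 1), hp⟩ : Fin r₂) = j := fun hp => Fin.ext (by dsimp; omega)
      rw [hidx, hidx2] at hB'
      apply Fin.ext
      omega
    subst hf1; subst hg1; subst hf2; subst hg2
    rfl

private def emb1 {r : ℕ} (k0 : Fin r) : Fin k0.val → Fin r :=
  fun i => ⟨i.val, lt_trans i.isLt k0.isLt⟩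

private def emb2 {r : ℕ} (k0 : Fin r) : Fin (r - k0.val - 1) → Fin r :=
  fun j => ⟨k0.val + 1 + j.val, by have := j.isLt; omega⟩

private theorem emb1_val {r : ℕ} (k0 : Fin r) (i : Fin k0.val) : (emb1 k0 i).val = i.val := rfl

private theorem emb2_val {r : ℕ} (k0 : Fin r) (j : Fin (r - k0.val - 1)) :
    (emb2 k0 j).val = k0.val + 1 + j.val := rfl

section Split
variable {m r : ℕ} (a b : Fin r → Fin m) (ha : StrictMono a) (hb : StrictMono b)
  (hab : ∀ k, b k ≤ a k) (k0 : Fin r) (hk0D : a k0 = b k0)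
  (hmin : ∀ k : Fin r, k < k0 → a k ≠ b k)

private def splitL : JS (a k0).val :=
  ⟨⟨k0.val,
    fun i => ⟨(a (emb1 k0 i)).val, by
      have h := ha (show emb1 k0 i < k0 from i.isLt)
      rw [Fin.lt_def] at h
      exact h⟩,
    fun i => ⟨(b (emb1 k0 i)).val, by
      have h1 := hab (emb1 k0 i)
      have h2 := ha (show emb1 k0 i < k0 from i.isLt)
      rw [Fin.le_def] at h1
      rw [Fin.lt_def] at h2
      show _ < (a k0).val
      omega⟩⟩, by
    refine ⟨?_, ?_, ?_⟩
    · intro i l hil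
      rw [Fin.lt_def]
      dsimp only
      have h := ha (show emb1 k0 i < emb1 k0 l from hil)
      rw [Fin.lt_def] at h
      exact h
    · intro i l hil
      rw [Fin.lt_def]
      dsimp only
      have h := hb (show emb1 k0 i < emb1 k0 l from hil)
      rw [Fin.lt_def] at h
      exact h
    · intro i
      rw [Fin.lt_def]
      dsimp only
      have h1 := hab (emb1 k0 i)
      rw [Fin.le_def] at h1
      have h2 := hmin (emb1 k0 i) (show emb1 k0 i < k0 from i.isLt)
      have h3 : (b (emb1 k0 i)).val ≠ (a (emb1 k0 i)).val := fun hv => h2 (Fin.ext hv.symm)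
      omega⟩

private def splitR : JP (m - (a k0).val - 1) :=
  ⟨⟨r - k0.val - 1,
    fun j => ⟨(a (emb2 k0 j)).val - (a k0).val - 1, by
      have h1 := ha (show k0 < emb2 k0 j from show k0.val < k0.val + 1 + j.val by omega)
      rw [Fin.lt_def] at h1
      have h2 := (a (emb2 k0 j)).isLt
      show _ < m - (a k0).val - 1
      omega⟩,
    fun j => ⟨(b (emb2 k0 j)).val - (a k0).val - 1, by
      have h1 := hb (show k0 < emb2 k0 j from show k0.val < k0.val + 1 + j.val by omega)
      rw [Fin.lt_def, ← hk0D] at h1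
      have h2 := (b (emb2 k0 j)).isLt
      show _ < m - (a k0).val - 1
      omega⟩⟩, by
    refine ⟨?_, ?_, ?_⟩
    · intro j l hjl
      rw [Fin.lt_def]
      dsimp only
      have h := ha (show emb2 k0 j < emb2 k0 l from
        show k0.val + 1 + j.val < k0.val + 1 + l.val by have := hjl; rw [Fin.lt_def] at this; omega)
      rw [Fin.lt_def] at h
      have h2 := ha (show k0 < emb2 k0 j from show k0.val < k0.val + 1 + j.val by omega)
      rw [Fin.lt_def] at h2
      omega
    · intro j l hjl
      rw [Fin.lt_def]
      dsimp only
      have h := hb (show emb2 k0 j < emb2 k0 l from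
        show k0.val + 1 + j.val < k0.val + 1 + l.val by have := hjl; rw [Fin.lt_def] at this; omega)
      rw [Fin.lt_def] at h
      have h2 := hb (show k0 < emb2 k0 j from show k0.val < k0.val + 1 + j.val by omega)
      rw [Fin.lt_def, ← hk0D] at h2
      omega
    · intro j
      rw [Fin.le_def]
      dsimp only
      have h1 := hab (emb2 k0 j)
      rw [Fin.le_def] at h1
      omega⟩

end Split

private theorem Gmap_surj (m : ℕ) : Function.Surjective (Gmap m) := by
  classical
  rintro ⟨⟨r, a, b⟩, ha, hb, hab⟩
  by_cases hD : (Finset.univ.filter (fun k : Fin r => a k = b k)).Nonempty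
  · -- there is a diagonal element; split at the first one
    set k0 := (Finset.univ.filter (fun k : Fin r => a k = b k)).min' hD with hk0def
    have hk0D : a k0 = b k0 := by
      have h := Finset.min'_mem _ hD
      rw [Finset.mem_filter] at h
      exact h.2
    have hmin : ∀ k : Fin r, k < k0 → a k ≠ b k := by
      intro k hk hne
      have hkD : k ∈ Finset.univ.filter (fun k : Fin r => a k = b k) :=
        Finset.mem_filter.mpr ⟨Finset.mem_univ _, hne⟩
      exact absurd (Finset.min'_le _ k hkD) (not_le.mpr hk)
    have hk0r : k0.val < r := k0.isLt
    have hlen : k0.val + 1 + (r - k0.val - 1) = r := by omega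
    refine ⟨⟨(a k0).castSucc, splitL a b ha hb hab k0 hk0D hmin, splitR a b ha hb hab k0 hk0D⟩, ?_⟩
    have hne : ¬ (((a k0).castSucc : Fin (m + 1)).val = m) := by
      have := (a k0).isLt
      rw [Fin.coe_castSucc]
      omega
    simp only [Gmap]
    erw [dif_neg hne]
    dsimp only [splitL, splitR]
    refine ext_helper _ _ hlen (fun k => ?_) (fun k => ?_) <;> apply Fin.ext
    · rcases Nat.lt_trichotomy k.val k0.val with hk | hk | hk
      · rw [glueF_lt _ _ _ _ hk]
        dsimp only
        exact congrArg (fun z => (a z).val) (show emb1 k0 ⟨k.val, hk⟩ = Fin.cast hlen k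
          from Fin.ext rfl)
      · rw [glueF_eq _ _ _ _ hk]
        rw [show Fin.cast hlen k = k0 from Fin.ext hk]
        simp [Fin.coe_castSucc]
      · rw [glueF_gt _ _ _ _ hk]
        dsimp only
        have hidx : ∀ (hp : k.val - (k0.val + 1) < r - k0.val - 1),
            emb2 k0 ⟨k.val - (k0.val + 1), hp⟩ = Fin.cast hlen k :=
          fun hp => Fin.ext (by rw [emb2_val]; dsimp; omega)
        rw [hidx]
        have hgt := ha (show k0 < Fin.cast hlen k from hk)
        rw [Fin.lt_def] at hgt
        simp only [Fin.coe_castSucc, Fin.coe_cast] at hgt ⊢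
        omega
    · rcases Nat.lt_trichotomy k.val k0.val with hk | hk | hk
      · rw [glueF_lt _ _ _ _ hk]
        dsimp only
        exact congrArg (fun z => (b z).val) (show emb1 k0 ⟨k.val, hk⟩ = Fin.cast hlen k
          from Fin.ext rfl)
      · rw [glueF_eq _ _ _ _ hk]
        rw [show Fin.cast hlen k = k0 from Fin.ext hk]
        dsimp only
        rw [← hk0D]
        simp [Fin.coe_castSucc]
      · rw [glueF_gt _ _ _ _ hk]
        dsimp only
        have hidx : ∀ (hp : k.val - (k0.val + 1) < r - k0.val - 1),
            emb2 k0 ⟨k.val - (k0.val + 1), hp⟩ = Fin.cast hlen k :=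
          fun hp => Fin.ext (by rw [emb2_val]; dsimp; omega)
        rw [hidx]
        have hgt := hb (show k0 < Fin.cast hlen k from hk)
        dsimp only at hgt
        rw [Fin.lt_def, ← hk0D] at hgt
        simp only [Fin.coe_castSucc, Fin.coe_cast] at hgt ⊢
        omega
  · -- no diagonal element : the pair is strict
    have hstrict : ∀ k, b k < a k := by
      intro k
      rcases lt_or_eq_of_le (hab k) with h | h
      · exact h
      · exact absurd ⟨k, Finset.mem_filter.mpr ⟨Finset.mem_univ _, h.symm⟩⟩ hD
    refine ⟨⟨Fin.last m, ⟨⟨r, a, b⟩, ha, hb, hstrict⟩, JPempty _⟩, ?_⟩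
    simp only [Gmap]
    erw [dif_pos (show (Fin.last m).val = m from rfl)]
    refine ext_helper _ _ rfl (fun k => ?_) (fun k => ?_) <;> apply Fin.ext <;>
      simp [Fin.coe_cast, Fin.cast_eq_self]

private theorem cardJP (m : ℕ) : Nat.card (JP m) = catalan (m + 1) := by
  induction m using Nat.strong_induction_on with
  | _ m IH =>
    match m with
    | 0 => rw [card_eq_one rfl, catalan_one]
    | Nat.succ n =>
      have e := Equiv.ofBijective _ ⟨Gmap_inj (n+1), Gmap_surj (n+1)⟩
      rw [← Nat.card_congr e]
      letI : ∀ t : Fin (n + 2), Fintype (JS t.val × JP (n + 1 - t.val - 1)) :=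
        fun t => Fintype.ofFinite _
      rw [Nat.card_eq_fintype_card, Fintype.card_sigma]
      rw [catalan_succ]
      apply Finset.sum_congr rfl
      intro t _
      rw [← Nat.card_eq_fintype_card, Nat.card_prod]
      have h1 : Nat.card (JS t.val) = catalan t.val := by
        match ht : t.val with
        | 0 => rw [cardJS0, catalan_zero]
        | Nat.succ s =>
          rw [Nat.card_congr (JSequiv s), IH s (by have := t.isLt; omega)]
      have h2 : Nat.card (JP (n + 1 - t.val - 1)) = catalan (n + 1 - t.val) := by
        rcases Nat.lt_or_ge t.val (n + 1) with h | h
        · have hv : n + 1 - t.val - 1 = n - t.val := by omega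
          rw [hv, IH (n - t.val) (by omega)]
          congr 1
          omega
        · have hv : n + 1 - t.val - 1 = 0 := by omega
          have hv2 : n + 1 - t.val = 0 := by omega
          rw [hv, hv2, card_eq_one rfl, catalan_zero]
      rw [h1, h2]

/-- The number of Jones normal forms (without `τ` factor) on the generators
`e_1, …, e_{n-1}` — i.e. the number of data `r ≥ 0` together with sequences
`i_1 < ⋯ < i_r` and `j_1 < ⋯ < j_r` in `{1, …, n-1}` (encoded as `Fin (n-1)`)
with `j_k ≤ i_k` for all `k`, including the empty one — equals the `n`-th
Catalan number `(2n).choose n / (n+1)`. -/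
theorem card_jones_normal_forms (n : ℕ) :
    Nat.card {p : Σ r : ℕ, (Fin r → Fin (n - 1)) × (Fin r → Fin (n - 1)) //
        StrictMono p.2.1 ∧ StrictMono p.2.2 ∧ ∀ k, p.2.2 k ≤ p.2.1 k} =
      (2 * n).choose n / (n + 1) := by
  show Nat.card (JP (n - 1)) = (2 * n).choose n / (n + 1)
  rw [cardJP]
  match n with
  | 0 => simp [catalan_one]
  | Nat.succ k =>
    rw [show k + 1 - 1 + 1 = k + 1 by omega, catalan_eq_centralBinom_div, Nat.centralBinom]
end

section
/- Given a rewriting system where rewriting is compatible with contexts, if every critical pair (minimal overlap of two rules) is confluent, then every local branching is confluent, i.e. the system is locally confluent. -/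
namespace CriticalPairs

variable {α : Type*} (R : List α → List α → Prop)

/-- One rewriting step: a rule applied inside an arbitrary context. -/
def Step (x y : List α) : Prop :=
  ∃ u v a b, R a b ∧ x = u ++ a ++ v ∧ y = u ++ b ++ v

/-- A local branching: two one-step rewrites from the same word. -/
def Branching (t : List α × List α × List α) : Prop :=
  Step R t.1 t.2.1 ∧ Step R t.1 t.2.2

/-- The order `⊑` on branchings generated by embedding into contexts:
`(a,b,c) ⊑ (uav, ubv, ucv)`. -/
def Sqle (t t' : List α × List α × List α) : Prop :=
  ∃ u v, t'.1 = u ++ t.1 ++ v ∧ t'.2.1 = u ++ t.2.1 ++ v ∧ t'.2.2 = u ++ t.2.2 ++ v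

/-- An overlap: a branching that is neither trivial (both results equal) nor
has disjoint redexes (of the form `(ab, a'b, ab')` with steps `a → a'`,
`b → b'`). -/
def Overlap (t : List α × List α × List α) : Prop :=
  Branching R t ∧ ¬ t.2.1 = t.2.2 ∧
    ¬ ∃ a b a' b', Step R a a' ∧ Step R b b' ∧
        t = (a ++ b, a' ++ b, a ++ b')

/-- A critical pair: a minimal overlap for the order `⊑`. -/
def CriticalPair (t : List α × List α × List α) : Prop :=
  Overlap R t ∧ ¬ ∃ t', Overlap R t' ∧ Sqle t' t ∧ t' ≠ t

lemma step_append (u v : List α) {a b : List α} (h : Step R a b) :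
    Step R (u ++ a ++ v) (u ++ b ++ v) := by
  obtain ⟨p, q, x, y, hr, rfl, rfl⟩ := h
  exact ⟨u ++ p, q ++ v, x, y, hr, by simp, by simp⟩

lemma rtg_append (u v : List α) {a b : List α}
    (h : Relation.ReflTransGen (Step R) a b) :
    Relation.ReflTransGen (Step R) (u ++ a ++ v) (u ++ b ++ v) := by
  induction h with
  | refl => exact .refl
  | tail _ hstep ih => exact ih.tail (step_append R u v hstep)

/-- Critical pair lemma: if every critical pair of the rewriting system is
confluent, then the system is locally confluent. -/
theorem locally_confluent_of_critical_pairs_confluent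
    (hcp : ∀ t, CriticalPair R t →
      ∃ d, Relation.ReflTransGen (Step R) t.2.1 d ∧
           Relation.ReflTransGen (Step R) t.2.2 d) :
    ∀ w b c, Step R w b → Step R w c →
      ∃ d, Relation.ReflTransGen (Step R) b d ∧
           Relation.ReflTransGen (Step R) c d := by
  suffices H : ∀ n w b c, w.length < n → Step R w b → Step R w c →
      ∃ d, Relation.ReflTransGen (Step R) b d ∧
           Relation.ReflTransGen (Step R) c d by
    intro w b c hb hc
    exact H (w.length + 1) w b c (Nat.lt_succ_self _) hb hc
  intro n
  induction n with
  | zero => intro w b c h; omega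
  | succ n ih =>
    intro w b c hw hb hc
    by_cases hbc : b = c
    · exact ⟨b, .refl, hbc ▸ .refl⟩
    by_cases hdis : ∃ a b0 a' b0', Step R a a' ∧ Step R b0 b0' ∧
        ((w, b, c) : List α × List α × List α) = (a ++ b0, a' ++ b0, a ++ b0')
    · obtain ⟨a, b0, a', b0', ha, hb0, heq⟩ := hdis
      simp only [Prod.mk.injEq] at heq
      obtain ⟨hw1, hb1, hc1⟩ := heq
      subst hw1 hb1 hc1
      refine ⟨a' ++ b0', ?_, ?_⟩
      · have : Step R (a' ++ b0 ++ []) (a' ++ b0' ++ []) := step_append R a' [] hb0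
        simpa using Relation.ReflTransGen.single this
      · have : Step R ([] ++ a ++ b0') ([] ++ a' ++ b0') := step_append R [] b0' ha
        simpa using Relation.ReflTransGen.single this
    · have hov : Overlap R (w, b, c) := ⟨⟨hb, hc⟩, hbc, hdis⟩
      by_cases hcp' : CriticalPair R (w, b, c)
      · exact hcp _ hcp'
      · have hex : ∃ t', Overlap R t' ∧ Sqle t' (w, b, c) ∧ t' ≠ (w, b, c) := by
          by_contra h
          exact hcp' ⟨hov, h⟩
        obtain ⟨⟨w', b', c'⟩, hov', ⟨u, v, h1, h2, h3⟩, hne⟩ := hex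
        simp only at h1 h2 h3
        have hlen : w'.length < w.length := by
          have hL : w.length = u.length + w'.length + v.length := by
            simp [h1]; omega
          rcases Nat.lt_or_ge w'.length w.length with h | h
          · exact h
          · exfalso
            have hu : u = [] := by
              have := List.length_eq_zero_iff.mp (by omega : u.length = 0)
              exact this
            have hv : v = [] := by
              have := List.length_eq_zero_iff.mp (by omega : v.length = 0)
              exact this
            subst hu hv
            simp at h1 h2 h3
            exact hne (by simp [h1, h2, h3])
        obtain ⟨d, hd1, hd2⟩ := ih w' b' c' (by omega) hov'.1.1 hov'.1.2
        refine ⟨u ++ d ++ v, ?_, ?_⟩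
        · rw [h2]; exact rtg_append R u v hd1
        · rw [h3]; exact rtg_append R u v hd2

end CriticalPairs
end
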